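/- arXiv:2211.07208 — 6 statements merged into one kernel-verified Lean document; each statement's English description precedes it below -/
import Mathlib

section
/- Let M be uniform on F₂^{k₁−k₂}, V₁ uniform on F₂^{n−k₁}, V₂ⁿ i.i.d. uniform on F₂, and Sⁿ i.i.d. with law p(s), all mutually independent. Set Zⁿ = pad₂(B⁻¹·(V₁,M)) where (V₁,M) ∈ F₂^{n−k₂} is the concatenation of V₁ and M, set Uⁿ = Zⁿ ⊕ V₂ⁿ ⊕ H̃₂V₂ⁿ, and transmit Xⁿ = φ₂(Sⁿ, Uⁿ) ⊕ Uⁿ. Conditionally on (Xⁿ,Sⁿ), let Y₁,…,Yₙ be independent with Yᵢ distributed as p(·|Xᵢ,Sᵢ). Decode X̂ⁿ = φ₁(pad₁(V₁), Yⁿ) and M̂ = QX̂ⁿ. Then P{M̂ ≠ M} ≤ δ + ε. (Error guarantee of the Gelfand–Pinsker coding scheme built from a Slepian–Wolf code and a point-to-point channel code.) -/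
/- Coordinates of `F₂ⁿ` are indexed by `Fin a ⊕ (Fin c ⊕ Fin b)` with
`a = k₂`, `c = k₁ − k₂`, `b = n − k₁` (so `n = a + c + b`, `k₁ = a + c`,
`k₂ = a`); the first `k₂` coordinates are the `Fin a` component and the first
`k₁` coordinates are the `Fin a` and `Fin c` components.  The stacked matrix
`H₂ = [H₁; Q]` is `Matrix.fromRows H₁ Q`, its last `n − k₂` columns form
`B = (Matrix.fromRows H₁ Q).submatrix id Sum.inr`, and `Binv` is the inverse
of `B`. -/

/-- `pad₂ w`: first `k₂` entries `0`, followed by `w ∈ F₂^{n−k₂}`. -/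
def padGP₂ {a b c : ℕ} (w : (Fin c ⊕ Fin b) → ZMod 2) :
    (Fin a ⊕ (Fin c ⊕ Fin b)) → ZMod 2 :=
  Sum.elim (fun _ => 0) w

/-- `pad₁ v₁`: first `k₁` entries `0`, followed by `v₁ ∈ F₂^{n−k₁}`. -/
def padGP₁ {a b c : ℕ} (v₁ : Fin b → ZMod 2) :
    (Fin a ⊕ (Fin c ⊕ Fin b)) → ZMod 2 :=
  Sum.elim (fun _ => 0) (Sum.elim (fun _ => 0) v₁)

/-- `H̃₂`: first `k₂` rows zero, last `n − k₂` rows equal `B⁻¹H₂`. -/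
def HtildeGP {a b c : ℕ}
    (H₁ : Matrix (Fin b) (Fin a ⊕ (Fin c ⊕ Fin b)) (ZMod 2))
    (Q : Matrix (Fin c) (Fin a ⊕ (Fin c ⊕ Fin b)) (ZMod 2))
    (Binv : Matrix (Fin c ⊕ Fin b) (Fin b ⊕ Fin c) (ZMod 2)) :
    Matrix (Fin a ⊕ (Fin c ⊕ Fin b)) (Fin a ⊕ (Fin c ⊕ Fin b)) (ZMod 2) :=
  Matrix.of fun i j =>
    Sum.elim (fun _ => (0 : ZMod 2))
      (fun i' => (Binv * Matrix.fromRows H₁ Q) i' j) i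

section GPaux

lemma GP_addself {ι : Type*} (v : ι → ZMod 2) : v + v = 0 := by
  funext i
  have : ∀ x : ZMod 2, x + x = 0 := by decide
  exact this (v i)

lemma GP_add_add_cancel {ι : Type*} (v w : ι → ZMod 2) : v + w + w = v := by
  rw [add_assoc, GP_addself, add_zero]

variable {a b c : ℕ}
  (H₁ : Matrix (Fin b) (Fin a ⊕ (Fin c ⊕ Fin b)) (ZMod 2))
  (Q : Matrix (Fin c) (Fin a ⊕ (Fin c ⊕ Fin b)) (ZMod 2))
  (Binv : Matrix (Fin c ⊕ Fin b) (Fin b ⊕ Fin c) (ZMod 2))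

lemma GP_mulVec_padGP₂ (H₂ : Matrix (Fin b ⊕ Fin c) (Fin a ⊕ (Fin c ⊕ Fin b)) (ZMod 2))
    (w : (Fin c ⊕ Fin b) → ZMod 2) :
    H₂.mulVec (padGP₂ (a := a) w) = (H₂.submatrix id Sum.inr).mulVec w := by
  funext r
  simp [Matrix.mulVec, dotProduct, Fintype.sum_sum_type, padGP₂]

lemma GP_HtildeGP_mulVec (x : (Fin a ⊕ (Fin c ⊕ Fin b)) → ZMod 2) :
    (HtildeGP H₁ Q Binv).mulVec x
      = padGP₂ (Binv.mulVec ((Matrix.fromRows H₁ Q).mulVec x)) := by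
  funext r
  cases r with
  | inl i => simp [HtildeGP, Matrix.mulVec, dotProduct, padGP₂]
  | inr i =>
    show ((Binv * Matrix.fromRows H₁ Q).mulVec x) i
      = (Binv.mulVec ((Matrix.fromRows H₁ Q).mulVec x)) i
    rw [← Matrix.mulVec_mulVec]

lemma GP_B_Binv (hB : (Matrix.fromRows H₁ Q).submatrix id Sum.inr * Binv = 1)
    (w : (Fin b ⊕ Fin c) → ZMod 2) :
    ((Matrix.fromRows H₁ Q).submatrix id Sum.inr).mulVec (Binv.mulVec w) = w := by
  rw [Matrix.mulVec_mulVec, hB, Matrix.one_mulVec]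

lemma GP_Binv_B (hB' : Binv * (Matrix.fromRows H₁ Q).submatrix id Sum.inr = 1)
    (w : (Fin c ⊕ Fin b) → ZMod 2) :
    Binv.mulVec (((Matrix.fromRows H₁ Q).submatrix id Sum.inr).mulVec w) = w := by
  rw [Matrix.mulVec_mulVec, hB', Matrix.one_mulVec]

lemma GP_H2_Ht (hB : (Matrix.fromRows H₁ Q).submatrix id Sum.inr * Binv = 1)
    (x : (Fin a ⊕ (Fin c ⊕ Fin b)) → ZMod 2) :
    (Matrix.fromRows H₁ Q).mulVec ((HtildeGP H₁ Q Binv).mulVec x)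
      = (Matrix.fromRows H₁ Q).mulVec x := by
  rw [GP_HtildeGP_mulVec, GP_mulVec_padGP₂, GP_B_Binv H₁ Q Binv hB]

lemma GP_Ht_Ht (hB : (Matrix.fromRows H₁ Q).submatrix id Sum.inr * Binv = 1)
    (x : (Fin a ⊕ (Fin c ⊕ Fin b)) → ZMod 2) :
    (HtildeGP H₁ Q Binv).mulVec ((HtildeGP H₁ Q Binv).mulVec x)
      = (HtildeGP H₁ Q Binv).mulVec x := by
  rw [GP_HtildeGP_mulVec H₁ Q Binv ((HtildeGP H₁ Q Binv).mulVec x),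
    GP_H2_Ht H₁ Q Binv hB, ← GP_HtildeGP_mulVec]

lemma GP_Ht_pad (hB : (Matrix.fromRows H₁ Q).submatrix id Sum.inr * Binv = 1)
    (w : (Fin b ⊕ Fin c) → ZMod 2) :
    (HtildeGP H₁ Q Binv).mulVec (padGP₂ (Binv.mulVec w)) = padGP₂ (Binv.mulVec w) := by
  rw [GP_HtildeGP_mulVec, GP_mulVec_padGP₂, GP_B_Binv H₁ Q Binv hB]

def GPu (m : Fin c → ZMod 2) (v₁ : Fin b → ZMod 2)
    (v₂ : (Fin a ⊕ (Fin c ⊕ Fin b)) → ZMod 2) : (Fin a ⊕ (Fin c ⊕ Fin b)) → ZMod 2 :=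
  padGP₂ (Binv.mulVec (Sum.elim v₁ m)) + v₂ + (HtildeGP H₁ Q Binv).mulVec v₂

lemma GP_H2_u (hB : (Matrix.fromRows H₁ Q).submatrix id Sum.inr * Binv = 1)
    (m : Fin c → ZMod 2) (v₁ : Fin b → ZMod 2)
    (v₂ : (Fin a ⊕ (Fin c ⊕ Fin b)) → ZMod 2) :
    (Matrix.fromRows H₁ Q).mulVec (GPu H₁ Q Binv m v₁ v₂) = Sum.elim v₁ m := by
  simp only [GPu, Matrix.mulVec_add, GP_H2_Ht H₁ Q Binv hB, GP_mulVec_padGP₂,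
    GP_B_Binv H₁ Q Binv hB]
  rw [GP_add_add_cancel]

lemma GP_Ht_u (hB : (Matrix.fromRows H₁ Q).submatrix id Sum.inr * Binv = 1)
    (hB' : Binv * (Matrix.fromRows H₁ Q).submatrix id Sum.inr = 1)
    (m : Fin c → ZMod 2) (v₁ : Fin b → ZMod 2)
    (v₂ : (Fin a ⊕ (Fin c ⊕ Fin b)) → ZMod 2) :
    (HtildeGP H₁ Q Binv).mulVec (GPu H₁ Q Binv m v₁ v₂)
      = padGP₂ (Binv.mulVec (Sum.elim v₁ m)) := by
  rw [GP_HtildeGP_mulVec, GP_H2_u H₁ Q Binv hB]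

def GPequiv (hB : (Matrix.fromRows H₁ Q).submatrix id Sum.inr * Binv = 1)
    (hB' : Binv * (Matrix.fromRows H₁ Q).submatrix id Sum.inr = 1) :
    ((Fin c → ZMod 2) × (Fin b → ZMod 2) × ((Fin a ⊕ (Fin c ⊕ Fin b)) → ZMod 2))
      ≃ (((Fin a ⊕ (Fin c ⊕ Fin b)) → ZMod 2) × ((Fin b ⊕ Fin c) → ZMod 2)) where
  toFun p := (GPu H₁ Q Binv p.1 p.2.1 p.2.2, (Matrix.fromRows H₁ Q).mulVec p.2.2)
  invFun q := (Q.mulVec q.1, H₁.mulVec q.1,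
    q.1 + (HtildeGP H₁ Q Binv).mulVec q.1 + padGP₂ (Binv.mulVec q.2))
  left_inv := by
    rintro ⟨m, v₁, v₂⟩
    have h2u := GP_H2_u H₁ Q Binv hB m v₁ v₂
    have h2u' := h2u
    rw [Matrix.fromRows_mulVec] at h2u'
    have hm : Q.mulVec (GPu H₁ Q Binv m v₁ v₂) = m := by
      funext i; exact congrFun h2u' (Sum.inr i)
    have hv₁ : H₁.mulVec (GPu H₁ Q Binv m v₁ v₂) = v₁ := by
      funext i; exact congrFun h2u' (Sum.inl i)
    have hv₂ : GPu H₁ Q Binv m v₁ v₂ + (HtildeGP H₁ Q Binv).mulVec (GPu H₁ Q Binv m v₁ v₂)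
        + padGP₂ (Binv.mulVec ((Matrix.fromRows H₁ Q).mulVec v₂)) = v₂ := by
      rw [GP_Ht_u H₁ Q Binv hB hB', ← GP_HtildeGP_mulVec]
      show padGP₂ (Binv.mulVec (Sum.elim v₁ m)) + v₂ + (HtildeGP H₁ Q Binv).mulVec v₂
          + padGP₂ (Binv.mulVec (Sum.elim v₁ m)) + (HtildeGP H₁ Q Binv).mulVec v₂ = v₂
      have h : padGP₂ (Binv.mulVec (Sum.elim v₁ m)) + v₂ + (HtildeGP H₁ Q Binv).mulVec v₂
          + padGP₂ (Binv.mulVec (Sum.elim v₁ m)) + (HtildeGP H₁ Q Binv).mulVec v₂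
          = v₂ + (padGP₂ (Binv.mulVec (Sum.elim v₁ m)) + padGP₂ (Binv.mulVec (Sum.elim v₁ m)))
            + ((HtildeGP H₁ Q Binv).mulVec v₂ + (HtildeGP H₁ Q Binv).mulVec v₂) := by abel
      rw [h, GP_addself, GP_addself, add_zero, add_zero]
    exact Prod.ext hm (Prod.ext hv₁ hv₂)
  right_inv := by
    rintro ⟨u, t⟩
    have hHtu : padGP₂ (Binv.mulVec ((Matrix.fromRows H₁ Q).mulVec u))
        = (HtildeGP H₁ Q Binv).mulVec u := (GP_HtildeGP_mulVec H₁ Q Binv u).symm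
    have hHtv₂ : (HtildeGP H₁ Q Binv).mulVec
        (u + (HtildeGP H₁ Q Binv).mulVec u + padGP₂ (Binv.mulVec t))
        = padGP₂ (Binv.mulVec t) := by
      simp only [Matrix.mulVec_add, GP_Ht_Ht H₁ Q Binv hB, GP_Ht_pad H₁ Q Binv hB]
      rw [GP_HtildeGP_mulVec H₁ Q Binv u]
      have h : padGP₂ (a := a) (Binv.mulVec ((Matrix.fromRows H₁ Q).mulVec u))
          + padGP₂ (Binv.mulVec ((Matrix.fromRows H₁ Q).mulVec u)) + padGP₂ (Binv.mulVec t)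
          = (padGP₂ (a := a) (Binv.mulVec ((Matrix.fromRows H₁ Q).mulVec u))
            + padGP₂ (Binv.mulVec ((Matrix.fromRows H₁ Q).mulVec u))) + padGP₂ (Binv.mulVec t) := by
        abel
      rw [h, GP_addself, zero_add]
    have hfst : GPu H₁ Q Binv (Q.mulVec u) (H₁.mulVec u)
        (u + (HtildeGP H₁ Q Binv).mulVec u + padGP₂ (Binv.mulVec t)) = u := by
      show padGP₂ (Binv.mulVec (Sum.elim (H₁.mulVec u) (Q.mulVec u)))
          + (u + (HtildeGP H₁ Q Binv).mulVec u + padGP₂ (Binv.mulVec t))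
          + (HtildeGP H₁ Q Binv).mulVec
              (u + (HtildeGP H₁ Q Binv).mulVec u + padGP₂ (Binv.mulVec t)) = u
      rw [hHtv₂, ← Matrix.fromRows_mulVec, hHtu]
      have h : (HtildeGP H₁ Q Binv).mulVec u
          + (u + (HtildeGP H₁ Q Binv).mulVec u + padGP₂ (Binv.mulVec t)) + padGP₂ (Binv.mulVec t)
          = u + ((HtildeGP H₁ Q Binv).mulVec u + (HtildeGP H₁ Q Binv).mulVec u)
            + (padGP₂ (Binv.mulVec t) + padGP₂ (Binv.mulVec t)) := by abel
      rw [h, GP_addself, GP_addself, add_zero, add_zero]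
    have hsnd : (Matrix.fromRows H₁ Q).mulVec
        (u + (HtildeGP H₁ Q Binv).mulVec u + padGP₂ (Binv.mulVec t)) = t := by
      simp only [Matrix.mulVec_add, GP_H2_Ht H₁ Q Binv hB, GP_mulVec_padGP₂,
        GP_B_Binv H₁ Q Binv hB]
      have h : (Matrix.fromRows H₁ Q).mulVec u + (Matrix.fromRows H₁ Q).mulVec u + t
          = ((Matrix.fromRows H₁ Q).mulVec u + (Matrix.fromRows H₁ Q).mulVec u) + t := by abel
      rw [h, GP_addself, zero_add]
    exact Prod.ext hfst hsnd

end GPaux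

section GPsum

lemma GP_sum_prod {ι' κ' : Type*} [Fintype ι'] [DecidableEq ι'] [Fintype κ']
    (f : ι' → κ' → ℝ) :
    ∑ x : ι' → κ', ∏ i, f i (x i) = ∏ i, ∑ j, f i j :=
  (Fintype.prod_sum f).symm

lemma GP_sum_prod_one {ι' κ' : Type*} [Fintype ι'] [DecidableEq ι'] [Fintype κ']
    (f : ι' → κ' → ℝ) (hf : ∀ i, ∑ j, f i j = 1) :
    ∑ x : ι' → κ', ∏ i, f i (x i) = 1 := by
  rw [GP_sum_prod]
  exact Finset.prod_eq_one fun i _ => hf i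

lemma GP_tv_bound {α : Type*} [Fintype α] (A B G : α → ℝ)
    (hG0 : ∀ x, 0 ≤ G x) (hG1 : ∀ x, G x ≤ 1)
    (hAB : ∑ x, A x ≤ ∑ x, B x) :
    ∑ x, A x * G x ≤ (∑ x, B x * G x) + (1/2) * ∑ x, |A x - B x| := by
  have key : ∀ x, A x * G x ≤ B x * G x + ((A x - B x) + |A x - B x|) / 2 := by
    intro x
    rcases le_or_gt (B x) (A x) with h | h
    · rw [abs_of_nonneg (by linarith : (0:ℝ) ≤ A x - B x)]
      nlinarith [mul_nonneg (sub_nonneg.mpr h) (sub_nonneg.mpr (hG1 x))]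
    · rw [abs_of_neg (by linarith : A x - B x < 0)]
      nlinarith [mul_nonneg (le_of_lt (sub_pos.mpr h)) (hG0 x)]
  calc ∑ x, A x * G x ≤ ∑ x, (B x * G x + ((A x - B x) + |A x - B x|) / 2) :=
      Finset.sum_le_sum fun x _ => key x
    _ = (∑ x, B x * G x) + ((∑ x, A x - ∑ x, B x) + ∑ x, |A x - B x|) / 2 := by
      rw [Finset.sum_add_distrib]
      congr 1
      rw [← Finset.sum_div, Finset.sum_add_distrib, Finset.sum_sub_distrib]
    _ ≤ _ := by linarith

end GPsum

section GPmain
variable {a b c : ℕ} {𝒮 𝒴 : Type} [Fintype 𝒮] [Fintype 𝒴]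

/-- conditional error weight of the SW decoder -/
def GPG (ch : ZMod 2 → 𝒮 → 𝒴 → ℝ)
    (φ₁ : ((Fin a ⊕ (Fin c ⊕ Fin b)) → ZMod 2) →
          ((Fin a ⊕ (Fin c ⊕ Fin b)) → 𝒴) →
          ((Fin a ⊕ (Fin c ⊕ Fin b)) → ZMod 2))
    (H₁ : Matrix (Fin b) (Fin a ⊕ (Fin c ⊕ Fin b)) (ZMod 2))
    (x : (Fin a ⊕ (Fin c ⊕ Fin b)) → ZMod 2)
    (s : (Fin a ⊕ (Fin c ⊕ Fin b)) → 𝒮) : ℝ :=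
  ∑ y : (Fin a ⊕ (Fin c ⊕ Fin b)) → 𝒴,
    if φ₁ (padGP₁ (H₁.mulVec x)) y ≠ x then ∏ i, ch (x i) (s i) (y i) else 0

lemma GPG_nonneg (ch : ZMod 2 → 𝒮 → 𝒴 → ℝ) (hch0 : ∀ x s y, 0 ≤ ch x s y)
    (φ₁ : _) (H₁ : _) (x : (Fin a ⊕ (Fin c ⊕ Fin b)) → ZMod 2)
    (s : (Fin a ⊕ (Fin c ⊕ Fin b)) → 𝒮) :
    0 ≤ GPG ch φ₁ H₁ x s := by
  refine Finset.sum_nonneg fun y _ => ?_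
  split_ifs
  · exact Finset.prod_nonneg fun i _ => hch0 _ _ _
  · exact le_refl 0

lemma GPG_le_one (ch : ZMod 2 → 𝒮 → 𝒴 → ℝ) (hch0 : ∀ x s y, 0 ≤ ch x s y)
    (hch1 : ∀ x s, ∑ y : 𝒴, ch x s y = 1)
    (φ₁ : _) (H₁ : _) (x : (Fin a ⊕ (Fin c ⊕ Fin b)) → ZMod 2)
    (s : (Fin a ⊕ (Fin c ⊕ Fin b)) → 𝒮) :
    GPG ch φ₁ H₁ x s ≤ 1 := by
  have h1 : GPG ch φ₁ H₁ x s ≤ ∑ y : (Fin a ⊕ (Fin c ⊕ Fin b)) → 𝒴,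
      ∏ i, ch (x i) (s i) (y i) := by
    refine Finset.sum_le_sum fun y _ => ?_
    split_ifs
    · exact le_refl _
    · exact Finset.prod_nonneg fun i _ => hch0 _ _ _
  refine h1.trans (le_of_eq ?_)
  exact GP_sum_prod_one (fun i yy => ch (x i) (s i) yy) (fun i => hch1 _ _)

lemma GP_pointwise
    (H₁ : Matrix (Fin b) (Fin a ⊕ (Fin c ⊕ Fin b)) (ZMod 2))
    (Q : Matrix (Fin c) (Fin a ⊕ (Fin c ⊕ Fin b)) (ZMod 2))
    (φ₁ : ((Fin a ⊕ (Fin c ⊕ Fin b)) → ZMod 2) →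
          ((Fin a ⊕ (Fin c ⊕ Fin b)) → 𝒴) →
          ((Fin a ⊕ (Fin c ⊕ Fin b)) → ZMod 2))
    (y : (Fin a ⊕ (Fin c ⊕ Fin b)) → 𝒴) (m : Fin c → ZMod 2) (v₁ : Fin b → ZMod 2)
    (x : (Fin a ⊕ (Fin c ⊕ Fin b)) → ZMod 2)
    (hH2x : (Matrix.fromRows H₁ Q).mulVec x = Sum.elim v₁ m)
    (w : ℝ) (hw : 0 ≤ w) :
    (if Q.mulVec (φ₁ (padGP₁ v₁) y) ≠ m then w else 0)
      ≤ (if φ₁ (padGP₁ (H₁.mulVec x)) y ≠ x then w else 0) := by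
  rw [Matrix.fromRows_mulVec] at hH2x
  have hQx : Q.mulVec x = m := funext fun i => congrFun hH2x (Sum.inr i)
  have hH1x : H₁.mulVec x = v₁ := funext fun i => congrFun hH2x (Sum.inl i)
  rw [hH1x]
  by_cases hxy : φ₁ (padGP₁ v₁) y = x
  · rw [if_neg (by simp [hxy, hQx]), if_neg (by simp [hxy])]
  · rw [if_pos hxy]
    split_ifs with h
    · exact le_refl w
    · exact hw

lemma GP_reindex
    (H₁ : Matrix (Fin b) (Fin a ⊕ (Fin c ⊕ Fin b)) (ZMod 2))
    (Q : Matrix (Fin c) (Fin a ⊕ (Fin c ⊕ Fin b)) (ZMod 2))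
    (Binv : Matrix (Fin c ⊕ Fin b) (Fin b ⊕ Fin c) (ZMod 2))
    (hB : (Matrix.fromRows H₁ Q).submatrix id Sum.inr * Binv = 1)
    (hB' : Binv * (Matrix.fromRows H₁ Q).submatrix id Sum.inr = 1)
    (F : ((Fin a ⊕ (Fin c ⊕ Fin b)) → ZMod 2) → ℝ) :
    ∑ m : Fin c → ZMod 2, ∑ v₁ : Fin b → ZMod 2,
      ∑ v₂ : (Fin a ⊕ (Fin c ⊕ Fin b)) → ZMod 2, F (GPu H₁ Q Binv m v₁ v₂)
      = (2:ℝ)^(b+c) * ∑ u : (Fin a ⊕ (Fin c ⊕ Fin b)) → ZMod 2, F u := by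
  calc
    ∑ m : Fin c → ZMod 2, ∑ v₁ : Fin b → ZMod 2,
        ∑ v₂ : (Fin a ⊕ (Fin c ⊕ Fin b)) → ZMod 2, F (GPu H₁ Q Binv m v₁ v₂)
      = ∑ p : (Fin c → ZMod 2) × (Fin b → ZMod 2) × ((Fin a ⊕ (Fin c ⊕ Fin b)) → ZMod 2),
          F (GPu H₁ Q Binv p.1 p.2.1 p.2.2) := by
        rw [Fintype.sum_prod_type]
        refine Finset.sum_congr rfl fun m _ => ?_
        exact (Fintype.sum_prod_type
          (fun q : (Fin b → ZMod 2) × ((Fin a ⊕ (Fin c ⊕ Fin b)) → ZMod 2) =>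
            F (GPu H₁ Q Binv m q.1 q.2))).symm
    _ = ∑ q : ((Fin a ⊕ (Fin c ⊕ Fin b)) → ZMod 2) × ((Fin b ⊕ Fin c) → ZMod 2), F q.1 :=
        Fintype.sum_equiv (GPequiv H₁ Q Binv hB hB') _ _ (fun p => rfl)
    _ = ∑ u : (Fin a ⊕ (Fin c ⊕ Fin b)) → ZMod 2,
          ∑ _t : (Fin b ⊕ Fin c) → ZMod 2, F u := Fintype.sum_prod_type _
    _ = (2:ℝ)^(b+c) * ∑ u : (Fin a ⊕ (Fin c ⊕ Fin b)) → ZMod 2, F u := by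
        rw [Finset.mul_sum]
        refine Finset.sum_congr rfl fun u _ => ?_
        rw [Finset.sum_const]
        simp only [Finset.card_univ, Fintype.card_fun, Fintype.card_sum, Fintype.card_fin,
          ZMod.card, nsmul_eq_mul]
        push_cast
        ring
end GPmain

section GPtv

lemma GP_pack {X Y Z : Type*} [Fintype X] [Fintype Y] [Fintype Z] (f : X → Y → Z → ℝ) :
    ∑ p : X × Y × Z, f p.1 p.2.1 p.2.2 = ∑ x, ∑ y, ∑ z, f x y z := by
  rw [Fintype.sum_prod_type]
  refine Finset.sum_congr rfl fun x _ => ?_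
  exact Fintype.sum_prod_type (fun q : Y × Z => f x q.1 q.2)

lemma GP_tv_bound₃ {X Y Z : Type*} [Fintype X] [Fintype Y] [Fintype Z]
    (A B G : X → Y → Z → ℝ) (hG0 : ∀ x y z, 0 ≤ G x y z) (hG1 : ∀ x y z, G x y z ≤ 1)
    (hAB : (∑ x, ∑ y, ∑ z, A x y z) ≤ ∑ x, ∑ y, ∑ z, B x y z) :
    ∑ x, ∑ y, ∑ z, A x y z * G x y z
      ≤ (∑ x, ∑ y, ∑ z, B x y z * G x y z)
        + (1/2) * ∑ x, ∑ y, ∑ z, |A x y z - B x y z| := by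
  rw [← GP_pack (fun x y z => A x y z * G x y z), ← GP_pack (fun x y z => B x y z * G x y z),
    ← GP_pack (fun x y z => |A x y z - B x y z|)]
  rw [← GP_pack A, ← GP_pack B] at hAB
  exact GP_tv_bound (fun p : X × Y × Z => A p.1 p.2.1 p.2.2)
    (fun p : X × Y × Z => B p.1 p.2.1 p.2.2)
    (fun p : X × Y × Z => G p.1 p.2.1 p.2.2)
    (fun p => hG0 _ _ _) (fun p => hG1 _ _ _) hAB

end GPtv


/-- **Gelfand–Pinsker coding scheme.**  `M` uniform on `F₂^{k₁−k₂}`, `V₁`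
uniform on `F₂^{n−k₁}`, `V₂ⁿ` i.i.d. uniform on `F₂`, `Sⁿ` i.i.d. with law
`p(s)`, all mutually independent.  Set `Zⁿ = pad₂(B⁻¹(V₁,M))`,
`Uⁿ = Zⁿ ⊕ V₂ⁿ ⊕ H̃₂V₂ⁿ`, transmit `Xⁿ = φ₂(Sⁿ,Uⁿ) ⊕ Uⁿ`, receive `Yⁿ`
through the channel `p(y|x,s)`, and decode `X̂ⁿ = φ₁(pad₁(V₁), Yⁿ)`,
`M̂ = QX̂ⁿ`.  If the Slepian–Wolf code `φ₁` has error probability ≤ `ε` on the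
problem `p(x,y) = ∑ₛ p(s)p(x|s)p(y|x,s)`, and the point-to-point code `φ₂`
takes values in `C₂ = ker H₂` and has shaping distance ≤ `δ` with respect to
the symmetrized channel `p̄(s,v|x) = p_{X,S}(x⊕v,s)`, then
`P{M̂ ≠ M} ≤ δ + ε`. -/
theorem stmt12 (a b c : ℕ) (hb : 0 < b) (hc : 0 < c)
    (𝒮 𝒴 : Type) [Fintype 𝒮] [Fintype 𝒴]
    (pS : 𝒮 → ℝ) (hpS0 : ∀ s, 0 ≤ pS s) (hpS1 : ∑ s : 𝒮, pS s = 1)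
    (pXS : 𝒮 → ZMod 2 → ℝ) (hpXS0 : ∀ s x, 0 ≤ pXS s x)
    (hpXS1 : ∀ s, ∑ x : ZMod 2, pXS s x = 1)
    (ch : ZMod 2 → 𝒮 → 𝒴 → ℝ) (hch0 : ∀ x s y, 0 ≤ ch x s y)
    (hch1 : ∀ x s, ∑ y : 𝒴, ch x s y = 1)
    (H₁ : Matrix (Fin b) (Fin a ⊕ (Fin c ⊕ Fin b)) (ZMod 2))
    (Q : Matrix (Fin c) (Fin a ⊕ (Fin c ⊕ Fin b)) (ZMod 2))
    (Binv : Matrix (Fin c ⊕ Fin b) (Fin b ⊕ Fin c) (ZMod 2))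
    (hB : (Matrix.fromRows H₁ Q).submatrix id Sum.inr * Binv = 1)
    (hB' : Binv * (Matrix.fromRows H₁ Q).submatrix id Sum.inr = 1)
    (φ₁ : ((Fin a ⊕ (Fin c ⊕ Fin b)) → ZMod 2) →
          ((Fin a ⊕ (Fin c ⊕ Fin b)) → 𝒴) →
          ((Fin a ⊕ (Fin c ⊕ Fin b)) → ZMod 2))
    (ε : ℝ)
    (hε : ∑ x : (Fin a ⊕ (Fin c ⊕ Fin b)) → ZMod 2,
        ∑ y : (Fin a ⊕ (Fin c ⊕ Fin b)) → 𝒴,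
        (if φ₁ (padGP₁ (H₁.mulVec x)) y ≠ x then
          ∏ i, (∑ s : 𝒮, pS s * pXS s (x i) * ch (x i) s (y i))
        else 0) ≤ ε)
    (φ₂ : ((Fin a ⊕ (Fin c ⊕ Fin b)) → 𝒮) →
          ((Fin a ⊕ (Fin c ⊕ Fin b)) → ZMod 2) →
          ((Fin a ⊕ (Fin c ⊕ Fin b)) → ZMod 2))
    (hφ₂C : ∀ s u, (Matrix.fromRows H₁ Q).mulVec (φ₂ s u) = 0)
    (δ : ℝ)
    (hδ : (1 / 2) * ∑ xc : (Fin a ⊕ (Fin c ⊕ Fin b)) → ZMod 2,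
        ∑ s : (Fin a ⊕ (Fin c ⊕ Fin b)) → 𝒮,
        ∑ v : (Fin a ⊕ (Fin c ⊕ Fin b)) → ZMod 2,
        |(if φ₂ s v = xc then
            (∏ i, pS (s i)) * ((1 : ℝ) / 2 ^ (a + c + b))
          else 0)
          - ∏ i, ((1 : ℝ) / 2) * pS (s i) * pXS (s i) (xc i + v i)| ≤ δ) :
    ∑ m : Fin c → ZMod 2, ∑ v₁ : Fin b → ZMod 2,
      ∑ v₂ : (Fin a ⊕ (Fin c ⊕ Fin b)) → ZMod 2,
      ∑ s : (Fin a ⊕ (Fin c ⊕ Fin b)) → 𝒮,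
      ∑ y : (Fin a ⊕ (Fin c ⊕ Fin b)) → 𝒴,
      (let u : (Fin a ⊕ (Fin c ⊕ Fin b)) → ZMod 2 :=
        padGP₂ (Binv.mulVec (Sum.elim v₁ m)) + v₂ + (HtildeGP H₁ Q Binv).mulVec v₂
      let x : (Fin a ⊕ (Fin c ⊕ Fin b)) → ZMod 2 := φ₂ s u + u
      if Q.mulVec (φ₁ (padGP₁ v₁) y) ≠ m then
        ((1 : ℝ) / 2 ^ c) * ((1 : ℝ) / 2 ^ b) * ((1 : ℝ) / 2 ^ (a + c + b)) *
          (∏ i, pS (s i)) * ∏ i, ch (x i) (s i) (y i)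
      else 0) ≤ δ + ε := by
  have hsum_pS : ∑ s : (Fin a ⊕ (Fin c ⊕ Fin b)) → 𝒮, ∏ i, pS (s i) = 1 :=
    GP_sum_prod_one (fun _ j => pS j) (fun _ => hpS1)
  have hXSshift : ∀ (s' : 𝒮) (x' : ZMod 2), ∑ v : ZMod 2, pXS s' (x' + v) = 1 := by
    intro s' x'
    rw [Fintype.sum_equiv (Equiv.addLeft x') (fun v => pXS s' (x' + v)) (pXS s')
      (fun v => rfl)]
    exact hpXS1 s'
  have hexp : a + (c + b) = a + c + b := (Nat.add_assoc a c b).symm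
  have hcancel : ∀ P : ℝ, (2:ℝ)^(a+c+b) * (P * ((1:ℝ)/2^(a+c+b))) = P := by
    intro P
    field_simp
  -- the total mass of the "code" distribution is 1
  have hA1 : (∑ xc : (Fin a ⊕ (Fin c ⊕ Fin b)) → ZMod 2,
      ∑ s : (Fin a ⊕ (Fin c ⊕ Fin b)) → 𝒮,
      ∑ v : (Fin a ⊕ (Fin c ⊕ Fin b)) → ZMod 2,
      if φ₂ s v = xc then (∏ i, pS (s i)) * ((1 : ℝ) / 2 ^ (a + c + b)) else 0) = 1 := by
    calc (∑ xc : (Fin a ⊕ (Fin c ⊕ Fin b)) → ZMod 2,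
          ∑ s : (Fin a ⊕ (Fin c ⊕ Fin b)) → 𝒮,
          ∑ v : (Fin a ⊕ (Fin c ⊕ Fin b)) → ZMod 2,
          if φ₂ s v = xc then (∏ i, pS (s i)) * ((1 : ℝ) / 2 ^ (a + c + b)) else 0)
        = ∑ s : (Fin a ⊕ (Fin c ⊕ Fin b)) → 𝒮,
          ∑ xc : (Fin a ⊕ (Fin c ⊕ Fin b)) → ZMod 2,
          ∑ v : (Fin a ⊕ (Fin c ⊕ Fin b)) → ZMod 2,
          if φ₂ s v = xc then (∏ i, pS (s i)) * ((1 : ℝ) / 2 ^ (a + c + b)) else 0 :=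
        Finset.sum_comm
      _ = ∑ s : (Fin a ⊕ (Fin c ⊕ Fin b)) → 𝒮,
          ∑ v : (Fin a ⊕ (Fin c ⊕ Fin b)) → ZMod 2,
          ∑ xc : (Fin a ⊕ (Fin c ⊕ Fin b)) → ZMod 2,
          if φ₂ s v = xc then (∏ i, pS (s i)) * ((1 : ℝ) / 2 ^ (a + c + b)) else 0 :=
        Finset.sum_congr rfl fun s _ => Finset.sum_comm
      _ = ∑ s : (Fin a ⊕ (Fin c ⊕ Fin b)) → 𝒮,
          ∑ _v : (Fin a ⊕ (Fin c ⊕ Fin b)) → ZMod 2,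
          (∏ i, pS (s i)) * ((1 : ℝ) / 2 ^ (a + c + b)) := by
        refine Finset.sum_congr rfl fun s _ => Finset.sum_congr rfl fun v _ => ?_
        rw [Finset.sum_ite_eq Finset.univ (φ₂ s v)
          (fun _ => (∏ i, pS (s i)) * ((1 : ℝ) / 2 ^ (a + c + b)))]
        rw [if_pos (Finset.mem_univ _)]
      _ = 1 := by
        simp only [Finset.sum_const, Finset.card_univ, Fintype.card_fun, Fintype.card_sum,
          Fintype.card_fin, ZMod.card, nsmul_eq_mul]
        push_cast
        rw [hexp]
        calc ∑ s : (Fin a ⊕ (Fin c ⊕ Fin b)) → 𝒮,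
              (2:ℝ)^(a+c+b) * ((∏ i, pS (s i)) * ((1 : ℝ) / 2 ^ (a + c + b)))
            = ∑ s : (Fin a ⊕ (Fin c ⊕ Fin b)) → 𝒮, ∏ i, pS (s i) :=
            Finset.sum_congr rfl fun s _ => hcancel _
          _ = 1 := hsum_pS
  -- the total mass of the target distribution is 1
  have hB1 : (∑ xc : (Fin a ⊕ (Fin c ⊕ Fin b)) → ZMod 2,
      ∑ s : (Fin a ⊕ (Fin c ⊕ Fin b)) → 𝒮,
      ∑ v : (Fin a ⊕ (Fin c ⊕ Fin b)) → ZMod 2,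
      ∏ i, ((1 : ℝ) / 2) * pS (s i) * pXS (s i) (xc i + v i)) = 1 := by
    have hv : ∀ (xc : (Fin a ⊕ (Fin c ⊕ Fin b)) → ZMod 2)
        (s : (Fin a ⊕ (Fin c ⊕ Fin b)) → 𝒮),
        (∑ v : (Fin a ⊕ (Fin c ⊕ Fin b)) → ZMod 2,
          ∏ i, ((1 : ℝ) / 2) * pS (s i) * pXS (s i) (xc i + v i))
          = ∏ i, ((1 : ℝ) / 2) * pS (s i) := by
      intro xc s
      rw [GP_sum_prod (fun i w => ((1 : ℝ) / 2) * pS (s i) * pXS (s i) (xc i + w))]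
      refine Finset.prod_congr rfl fun i _ => ?_
      rw [← Finset.mul_sum, hXSshift, mul_one]
    have hs : (∑ s : (Fin a ⊕ (Fin c ⊕ Fin b)) → 𝒮, ∏ i, ((1 : ℝ) / 2) * pS (s i))
        = ((1:ℝ)/2)^(a+(c+b)) := by
      rw [GP_sum_prod (fun _ σ => ((1 : ℝ) / 2) * pS σ)]
      have : ∀ i : Fin a ⊕ (Fin c ⊕ Fin b), (∑ σ : 𝒮, ((1 : ℝ) / 2) * pS σ) = (1:ℝ)/2 := by
        intro i
        rw [← Finset.mul_sum, hpS1, mul_one]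
      rw [Finset.prod_congr rfl fun i _ => this i, Finset.prod_const]
      congr 1
      simp
    calc (∑ xc : (Fin a ⊕ (Fin c ⊕ Fin b)) → ZMod 2,
          ∑ s : (Fin a ⊕ (Fin c ⊕ Fin b)) → 𝒮,
          ∑ v : (Fin a ⊕ (Fin c ⊕ Fin b)) → ZMod 2,
          ∏ i, ((1 : ℝ) / 2) * pS (s i) * pXS (s i) (xc i + v i))
        = ∑ _xc : (Fin a ⊕ (Fin c ⊕ Fin b)) → ZMod 2, ((1:ℝ)/2)^(a+(c+b)) := by
          refine Finset.sum_congr rfl fun xc _ => ?_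
          rw [Finset.sum_congr rfl fun s _ => hv xc s, hs]
      _ = 1 := by
          simp only [Finset.sum_const, Finset.card_univ, Fintype.card_fun, Fintype.card_sum,
            Fintype.card_fin, ZMod.card, nsmul_eq_mul]
          push_cast
          rw [← mul_pow]
          norm_num
  have hG0₃ : ∀ (xc : (Fin a ⊕ (Fin c ⊕ Fin b)) → ZMod 2)
      (s : (Fin a ⊕ (Fin c ⊕ Fin b)) → 𝒮)
      (v : (Fin a ⊕ (Fin c ⊕ Fin b)) → ZMod 2), 0 ≤ GPG ch φ₁ H₁ (xc + v) s :=
    fun xc s v => GPG_nonneg ch hch0 φ₁ H₁ _ _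
  have hG1₃ : ∀ (xc : (Fin a ⊕ (Fin c ⊕ Fin b)) → ZMod 2)
      (s : (Fin a ⊕ (Fin c ⊕ Fin b)) → 𝒮)
      (v : (Fin a ⊕ (Fin c ⊕ Fin b)) → ZMod 2), GPG ch φ₁ H₁ (xc + v) s ≤ 1 :=
    fun xc s v => GPG_le_one ch hch0 hch1 φ₁ H₁ _ _
  -- the final bound via the Slepian-Wolf hypothesis
  have hF : (∑ xc : (Fin a ⊕ (Fin c ⊕ Fin b)) → ZMod 2,
      ∑ s : (Fin a ⊕ (Fin c ⊕ Fin b)) → 𝒮,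
      ∑ v : (Fin a ⊕ (Fin c ⊕ Fin b)) → ZMod 2,
      (∏ i, ((1 : ℝ) / 2) * pS (s i) * pXS (s i) (xc i + v i)) *
        GPG ch φ₁ H₁ (xc + v) s) ≤ ε := by
    have hstep : ∀ (xc : (Fin a ⊕ (Fin c ⊕ Fin b)) → ZMod 2)
        (s : (Fin a ⊕ (Fin c ⊕ Fin b)) → 𝒮),
        (∑ v : (Fin a ⊕ (Fin c ⊕ Fin b)) → ZMod 2,
          (∏ i, ((1 : ℝ) / 2) * pS (s i) * pXS (s i) (xc i + v i)) *
            GPG ch φ₁ H₁ (xc + v) s)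
          = ∑ x : (Fin a ⊕ (Fin c ⊕ Fin b)) → ZMod 2,
            (∏ i, ((1 : ℝ) / 2) * pS (s i) * pXS (s i) (x i)) * GPG ch φ₁ H₁ x s := by
      intro xc s
      exact Fintype.sum_equiv (Equiv.addLeft xc) _
        (fun x => (∏ i, ((1 : ℝ) / 2) * pS (s i) * pXS (s i) (x i)) * GPG ch φ₁ H₁ x s)
        (fun v => rfl)
    have hfac : ∀ (x : (Fin a ⊕ (Fin c ⊕ Fin b)) → ZMod 2)
        (s : (Fin a ⊕ (Fin c ⊕ Fin b)) → 𝒮),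
        (∏ i, ((1 : ℝ) / 2) * pS (s i) * pXS (s i) (x i))
          = ((1:ℝ)/2)^(a+(c+b)) * ∏ i, pS (s i) * pXS (s i) (x i) := by
      intro x s
      calc (∏ i, ((1 : ℝ) / 2) * pS (s i) * pXS (s i) (x i))
          = ∏ i, ((1 : ℝ) / 2) * (pS (s i) * pXS (s i) (x i)) :=
          Finset.prod_congr rfl fun i _ => by ring
        _ = (∏ _i : Fin a ⊕ (Fin c ⊕ Fin b), ((1:ℝ)/2)) *
            ∏ i, pS (s i) * pXS (s i) (x i) := Finset.prod_mul_distrib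
        _ = ((1:ℝ)/2)^(a+(c+b)) * ∏ i, pS (s i) * pXS (s i) (x i) := by
          rw [Finset.prod_const]
          congr 1
          simp
    have hinner : (∑ s : (Fin a ⊕ (Fin c ⊕ Fin b)) → 𝒮,
        ∑ x : (Fin a ⊕ (Fin c ⊕ Fin b)) → ZMod 2,
        (∏ i, pS (s i) * pXS (s i) (x i)) * GPG ch φ₁ H₁ x s) ≤ ε := by
      rw [Finset.sum_comm]
      refine le_trans (le_of_eq ?_) hε
      refine Finset.sum_congr rfl fun x _ => ?_
      simp only [GPG]
      calc (∑ s : (Fin a ⊕ (Fin c ⊕ Fin b)) → 𝒮,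
            (∏ i, pS (s i) * pXS (s i) (x i)) *
              ∑ y : (Fin a ⊕ (Fin c ⊕ Fin b)) → 𝒴,
                if φ₁ (padGP₁ (H₁.mulVec x)) y ≠ x then ∏ i, ch (x i) (s i) (y i) else 0)
          = ∑ s : (Fin a ⊕ (Fin c ⊕ Fin b)) → 𝒮,
            ∑ y : (Fin a ⊕ (Fin c ⊕ Fin b)) → 𝒴,
            (∏ i, pS (s i) * pXS (s i) (x i)) *
              (if φ₁ (padGP₁ (H₁.mulVec x)) y ≠ x then ∏ i, ch (x i) (s i) (y i) else 0) :=
          Finset.sum_congr rfl fun s _ => Finset.mul_sum _ _ _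
        _ = ∑ y : (Fin a ⊕ (Fin c ⊕ Fin b)) → 𝒴,
            ∑ s : (Fin a ⊕ (Fin c ⊕ Fin b)) → 𝒮,
            (∏ i, pS (s i) * pXS (s i) (x i)) *
              (if φ₁ (padGP₁ (H₁.mulVec x)) y ≠ x then ∏ i, ch (x i) (s i) (y i) else 0) :=
          Finset.sum_comm
        _ = ∑ y : (Fin a ⊕ (Fin c ⊕ Fin b)) → 𝒴,
            (if φ₁ (padGP₁ (H₁.mulVec x)) y ≠ x then
              ∏ i, (∑ σ : 𝒮, pS σ * pXS σ (x i) * ch (x i) σ (y i)) else 0) := by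
          refine Finset.sum_congr rfl fun y _ => ?_
          by_cases hcond : φ₁ (padGP₁ (H₁.mulVec x)) y ≠ x
          · rw [if_pos hcond]
            have h1 : ∀ s : (Fin a ⊕ (Fin c ⊕ Fin b)) → 𝒮,
                (∏ i, pS (s i) * pXS (s i) (x i)) *
                  (if φ₁ (padGP₁ (H₁.mulVec x)) y ≠ x then
                    ∏ i, ch (x i) (s i) (y i) else 0)
                = ∏ i, pS (s i) * pXS (s i) (x i) * ch (x i) (s i) (y i) := by
              intro s
              rw [if_pos hcond, ← Finset.prod_mul_distrib]
            rw [Finset.sum_congr rfl fun s _ => h1 s]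
            exact GP_sum_prod (fun i σ => pS σ * pXS σ (x i) * ch (x i) σ (y i))
          · rw [if_neg hcond]
            refine Finset.sum_eq_zero fun s _ => ?_
            rw [if_neg hcond, mul_zero]
    calc (∑ xc : (Fin a ⊕ (Fin c ⊕ Fin b)) → ZMod 2,
          ∑ s : (Fin a ⊕ (Fin c ⊕ Fin b)) → 𝒮,
          ∑ v : (Fin a ⊕ (Fin c ⊕ Fin b)) → ZMod 2,
          (∏ i, ((1 : ℝ) / 2) * pS (s i) * pXS (s i) (xc i + v i)) *
            GPG ch φ₁ H₁ (xc + v) s)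
        = ∑ _xc : (Fin a ⊕ (Fin c ⊕ Fin b)) → ZMod 2,
          ((1:ℝ)/2)^(a+(c+b)) *
            ∑ s : (Fin a ⊕ (Fin c ⊕ Fin b)) → 𝒮,
            ∑ x : (Fin a ⊕ (Fin c ⊕ Fin b)) → ZMod 2,
            (∏ i, pS (s i) * pXS (s i) (x i)) * GPG ch φ₁ H₁ x s := by
          refine Finset.sum_congr rfl fun xc _ => ?_
          rw [Finset.sum_congr rfl fun s _ => hstep xc s, Finset.mul_sum]
          refine Finset.sum_congr rfl fun s _ => ?_
          rw [Finset.mul_sum]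
          refine Finset.sum_congr rfl fun x _ => ?_
          rw [hfac, mul_assoc]
      _ = ((2:ℝ) * ((1:ℝ)/2))^(a+(c+b)) *
          ∑ s : (Fin a ⊕ (Fin c ⊕ Fin b)) → 𝒮,
          ∑ x : (Fin a ⊕ (Fin c ⊕ Fin b)) → ZMod 2,
          (∏ i, pS (s i) * pXS (s i) (x i)) * GPG ch φ₁ H₁ x s := by
          rw [Finset.sum_const, mul_pow]
          simp only [Finset.card_univ, Fintype.card_fun, Fintype.card_sum,
            Fintype.card_fin, ZMod.card, nsmul_eq_mul]
          push_cast
          ring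
      _ ≤ ε := by
          rw [show (2:ℝ) * ((1:ℝ)/2) = 1 by norm_num, one_pow, one_mul]
          exact hinner
  -- first bound the decoding-error indicator and rewrite the sum
  show (∑ m : Fin c → ZMod 2, ∑ v₁ : Fin b → ZMod 2,
      ∑ v₂ : (Fin a ⊕ (Fin c ⊕ Fin b)) → ZMod 2,
      ∑ s : (Fin a ⊕ (Fin c ⊕ Fin b)) → 𝒮,
      ∑ y : (Fin a ⊕ (Fin c ⊕ Fin b)) → 𝒴,
      if Q.mulVec (φ₁ (padGP₁ v₁) y) ≠ m then
        ((1 : ℝ) / 2 ^ c) * ((1 : ℝ) / 2 ^ b) * ((1 : ℝ) / 2 ^ (a + c + b)) *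
          (∏ i, pS (s i)) *
          ∏ i, ch ((φ₂ s (GPu H₁ Q Binv m v₁ v₂) + GPu H₁ Q Binv m v₁ v₂) i) (s i) (y i)
      else 0) ≤ δ + ε
  calc (∑ m : Fin c → ZMod 2, ∑ v₁ : Fin b → ZMod 2,
      ∑ v₂ : (Fin a ⊕ (Fin c ⊕ Fin b)) → ZMod 2,
      ∑ s : (Fin a ⊕ (Fin c ⊕ Fin b)) → 𝒮,
      ∑ y : (Fin a ⊕ (Fin c ⊕ Fin b)) → 𝒴,
      if Q.mulVec (φ₁ (padGP₁ v₁) y) ≠ m then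
        ((1 : ℝ) / 2 ^ c) * ((1 : ℝ) / 2 ^ b) * ((1 : ℝ) / 2 ^ (a + c + b)) *
          (∏ i, pS (s i)) *
          ∏ i, ch ((φ₂ s (GPu H₁ Q Binv m v₁ v₂) + GPu H₁ Q Binv m v₁ v₂) i) (s i) (y i)
      else 0)
      ≤ ∑ m : Fin c → ZMod 2, ∑ v₁ : Fin b → ZMod 2,
        ∑ v₂ : (Fin a ⊕ (Fin c ⊕ Fin b)) → ZMod 2,
        (fun u : (Fin a ⊕ (Fin c ⊕ Fin b)) → ZMod 2 =>
          ∑ s : (Fin a ⊕ (Fin c ⊕ Fin b)) → 𝒮,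
          ∑ y : (Fin a ⊕ (Fin c ⊕ Fin b)) → 𝒴,
          if φ₁ (padGP₁ (H₁.mulVec (φ₂ s u + u))) y ≠ φ₂ s u + u then
            ((1 : ℝ) / 2 ^ c) * ((1 : ℝ) / 2 ^ b) * ((1 : ℝ) / 2 ^ (a + c + b)) *
              (∏ i, pS (s i)) * ∏ i, ch ((φ₂ s u + u) i) (s i) (y i)
          else 0) (GPu H₁ Q Binv m v₁ v₂) := by
        refine Finset.sum_le_sum fun m _ => Finset.sum_le_sum fun v₁ _ =>
          Finset.sum_le_sum fun v₂ _ => Finset.sum_le_sum fun s _ =>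
          Finset.sum_le_sum fun y _ => ?_
        refine GP_pointwise H₁ Q φ₁ y m v₁ _ ?_ _ ?_
        · rw [Matrix.mulVec_add, hφ₂C, zero_add]
          exact GP_H2_u H₁ Q Binv hB m v₁ v₂
        · refine mul_nonneg (mul_nonneg ?_ (Finset.prod_nonneg fun i _ => hpS0 _))
            (Finset.prod_nonneg fun i _ => hch0 _ _ _)
          positivity
    _ = (2:ℝ)^(b+c) * ∑ u : (Fin a ⊕ (Fin c ⊕ Fin b)) → ZMod 2,
        ∑ s : (Fin a ⊕ (Fin c ⊕ Fin b)) → 𝒮,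
        ∑ y : (Fin a ⊕ (Fin c ⊕ Fin b)) → 𝒴,
        if φ₁ (padGP₁ (H₁.mulVec (φ₂ s u + u))) y ≠ φ₂ s u + u then
          ((1 : ℝ) / 2 ^ c) * ((1 : ℝ) / 2 ^ b) * ((1 : ℝ) / 2 ^ (a + c + b)) *
            (∏ i, pS (s i)) * ∏ i, ch ((φ₂ s u + u) i) (s i) (y i)
        else 0 :=
      GP_reindex H₁ Q Binv hB hB'
        (fun u : (Fin a ⊕ (Fin c ⊕ Fin b)) → ZMod 2 =>
          ∑ s : (Fin a ⊕ (Fin c ⊕ Fin b)) → 𝒮,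
          ∑ y : (Fin a ⊕ (Fin c ⊕ Fin b)) → 𝒴,
          if φ₁ (padGP₁ (H₁.mulVec (φ₂ s u + u))) y ≠ φ₂ s u + u then
            ((1 : ℝ) / 2 ^ c) * ((1 : ℝ) / 2 ^ b) * ((1 : ℝ) / 2 ^ (a + c + b)) *
              (∏ i, pS (s i)) * ∏ i, ch ((φ₂ s u + u) i) (s i) (y i)
          else 0)
    _ = ∑ u : (Fin a ⊕ (Fin c ⊕ Fin b)) → ZMod 2,
        ∑ s : (Fin a ⊕ (Fin c ⊕ Fin b)) → 𝒮,
        ((∏ i, pS (s i)) * ((1 : ℝ) / 2 ^ (a + c + b))) *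
          GPG ch φ₁ H₁ (φ₂ s u + u) s := by
      rw [Finset.mul_sum]
      refine Finset.sum_congr rfl fun u _ => ?_
      rw [Finset.mul_sum]
      refine Finset.sum_congr rfl fun s _ => ?_
      simp only [GPG]
      rw [Finset.mul_sum, Finset.mul_sum]
      refine Finset.sum_congr rfl fun y _ => ?_
      simp only [mul_ite, mul_zero]
      split_ifs with h
      · rw [pow_add]
        field_simp
      · rfl
    _ = ∑ xc : (Fin a ⊕ (Fin c ⊕ Fin b)) → ZMod 2,
        ∑ s : (Fin a ⊕ (Fin c ⊕ Fin b)) → 𝒮,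
        ∑ v : (Fin a ⊕ (Fin c ⊕ Fin b)) → ZMod 2,
        (if φ₂ s v = xc then (∏ i, pS (s i)) * ((1 : ℝ) / 2 ^ (a + c + b)) else 0) *
          GPG ch φ₁ H₁ (xc + v) s := by
      symm
      calc (∑ xc : (Fin a ⊕ (Fin c ⊕ Fin b)) → ZMod 2,
            ∑ s : (Fin a ⊕ (Fin c ⊕ Fin b)) → 𝒮,
            ∑ v : (Fin a ⊕ (Fin c ⊕ Fin b)) → ZMod 2,
            (if φ₂ s v = xc then (∏ i, pS (s i)) * ((1 : ℝ) / 2 ^ (a + c + b)) else 0) *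
              GPG ch φ₁ H₁ (xc + v) s)
          = ∑ s : (Fin a ⊕ (Fin c ⊕ Fin b)) → 𝒮,
            ∑ xc : (Fin a ⊕ (Fin c ⊕ Fin b)) → ZMod 2,
            ∑ v : (Fin a ⊕ (Fin c ⊕ Fin b)) → ZMod 2,
            (if φ₂ s v = xc then (∏ i, pS (s i)) * ((1 : ℝ) / 2 ^ (a + c + b)) else 0) *
              GPG ch φ₁ H₁ (xc + v) s := Finset.sum_comm
        _ = ∑ s : (Fin a ⊕ (Fin c ⊕ Fin b)) → 𝒮,
            ∑ v : (Fin a ⊕ (Fin c ⊕ Fin b)) → ZMod 2,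
            ∑ xc : (Fin a ⊕ (Fin c ⊕ Fin b)) → ZMod 2,
            (if φ₂ s v = xc then (∏ i, pS (s i)) * ((1 : ℝ) / 2 ^ (a + c + b)) else 0) *
              GPG ch φ₁ H₁ (xc + v) s :=
            Finset.sum_congr rfl fun s _ => Finset.sum_comm
        _ = ∑ s : (Fin a ⊕ (Fin c ⊕ Fin b)) → 𝒮,
            ∑ v : (Fin a ⊕ (Fin c ⊕ Fin b)) → ZMod 2,
            ((∏ i, pS (s i)) * ((1 : ℝ) / 2 ^ (a + c + b))) *
              GPG ch φ₁ H₁ (φ₂ s v + v) s := by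
            refine Finset.sum_congr rfl fun s _ => Finset.sum_congr rfl fun v _ => ?_
            simp only [ite_mul, zero_mul]
            rw [Finset.sum_ite_eq Finset.univ (φ₂ s v)
              (fun xc => ((∏ i, pS (s i)) * ((1 : ℝ) / 2 ^ (a + c + b))) *
                GPG ch φ₁ H₁ (xc + v) s)]
            rw [if_pos (Finset.mem_univ _)]
        _ = ∑ u : (Fin a ⊕ (Fin c ⊕ Fin b)) → ZMod 2,
            ∑ s : (Fin a ⊕ (Fin c ⊕ Fin b)) → 𝒮,
            ((∏ i, pS (s i)) * ((1 : ℝ) / 2 ^ (a + c + b))) *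
              GPG ch φ₁ H₁ (φ₂ s u + u) s := Finset.sum_comm
    _ ≤ (∑ xc : (Fin a ⊕ (Fin c ⊕ Fin b)) → ZMod 2,
        ∑ s : (Fin a ⊕ (Fin c ⊕ Fin b)) → 𝒮,
        ∑ v : (Fin a ⊕ (Fin c ⊕ Fin b)) → ZMod 2,
        (∏ i, ((1 : ℝ) / 2) * pS (s i) * pXS (s i) (xc i + v i)) *
          GPG ch φ₁ H₁ (xc + v) s)
        + (1/2) * ∑ xc : (Fin a ⊕ (Fin c ⊕ Fin b)) → ZMod 2,
          ∑ s : (Fin a ⊕ (Fin c ⊕ Fin b)) → 𝒮,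
          ∑ v : (Fin a ⊕ (Fin c ⊕ Fin b)) → ZMod 2,
          |(if φ₂ s v = xc then (∏ i, pS (s i)) * ((1 : ℝ) / 2 ^ (a + c + b)) else 0)
            - ∏ i, ((1 : ℝ) / 2) * pS (s i) * pXS (s i) (xc i + v i)| :=
      GP_tv_bound₃
        (fun xc s v => if φ₂ s v = xc then
          (∏ i, pS (s i)) * ((1 : ℝ) / 2 ^ (a + c + b)) else 0)
        (fun xc s v => ∏ i, ((1 : ℝ) / 2) * pS (s i) * pXS (s i) (xc i + v i))
        (fun xc s v => GPG ch φ₁ H₁ (xc + v) s)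
        hG0₃ hG1₃ (le_of_eq (hA1.trans hB1.symm))
    _ ≤ ε + δ := by
      refine add_le_add hF ?_
      exact hδ
    _ = δ + ε := add_comm ε δ
end

section
/- Let α ∈ (0,1), δ ≥ 0, and let φ₂: F₂ⁿ → F₂ⁿ have shaping Hamming distance spectrum W₂ satisfying (1/2)·∑_{w=0}^{n} |P{W₂ = w} − C(n,w)·α^{w}(1−α)^{n−w}| ≤ δ. Let Uⁿ be i.i.d. uniform on F₂, set X̃ⁿ = φ₂(Uⁿ) ⊕ Uⁿ, and let Γ be a uniformly random permutation of {1,…,n} independent of Uⁿ; set Xⁿ = Γ(X̃ⁿ). Then (1/2)·∑_{xⁿ ∈ F₂ⁿ} |P{Xⁿ = xⁿ} − α^{wt(xⁿ)}(1−α)^{n−wt(xⁿ)}| ≤ δ. (Lemma 5: channel-input shaping in the block-Markov asymmetric channel coding scheme.) -/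
open Finset

private lemma zmod2_eq_one {a : ZMod 2} (h : a ≠ 0) : a = 1 := by
  revert h; revert a; decide

private lemma norm_perm {n : ℕ} (y : Fin n → ZMod 2) (σ : Equiv.Perm (Fin n)) :
    hammingNorm (fun i => y (σ i)) = hammingNorm y := by
  unfold hammingNorm
  refine Finset.card_bij (fun i _ => σ i) ?_ ?_ ?_
  · intro a ha; simpa using (by simpa using ha : y (σ a) ≠ 0)
  · intro a _ b _ h; exact σ.injective h
  · intro b hb
    exact ⟨σ.symm b, by simpa using (by simpa using hb : y b ≠ 0), by simp⟩

private lemma exists_perm {n : ℕ} (x x' : Fin n → ZMod 2)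
    (h : hammingNorm x = hammingNorm x') :
    ∃ π : Equiv.Perm (Fin n), ∀ i, x (π i) = x' i := by
  have key : ∀ z : Fin n → ZMod 2, Fintype.card {i // ¬ z i ≠ 0} = n - hammingNorm z := by
    intro z
    rw [Fintype.card_subtype_compl]
    simp [Fintype.card_subtype, hammingNorm]
  have hc1 : Fintype.card {i // x' i ≠ 0} = Fintype.card {i // x i ≠ 0} := by
    simp only [Fintype.card_subtype]
    exact h.symm
  have hc2 : Fintype.card {i // ¬ (x' i ≠ 0)} = Fintype.card {i // ¬ (x i ≠ 0)} := by
    rw [key, key, h]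
  obtain ⟨e₁⟩ := Fintype.card_eq.mp hc1
  obtain ⟨e₂⟩ := Fintype.card_eq.mp hc2
  refine ⟨Equiv.subtypeCongr e₁ e₂, fun i => ?_⟩
  simp only [Equiv.subtypeCongr, Equiv.trans_apply]
  by_cases hi : x' i ≠ 0
  · rw [Equiv.sumCompl_symm_apply_of_pos (p := fun j => x' j ≠ 0) hi]
    simp only [Equiv.sumCongr_apply, Sum.map_inl, Equiv.sumCompl_apply_inl]
    rw [zmod2_eq_one hi, zmod2_eq_one (e₁ ⟨i, hi⟩).2]
  · rw [Equiv.sumCompl_symm_apply_of_neg (p := fun j => x' j ≠ 0) hi]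
    simp only [Equiv.sumCongr_apply, Sum.map_inr, Equiv.sumCompl_apply_inr]
    push_neg at hi
    have h2 := (e₂ ⟨i, by simpa using hi⟩).2
    push_neg at h2
    rw [hi, h2]

private lemma card_weight (n w : ℕ) :
    ((univ.filter fun x : Fin n → ZMod 2 => hammingNorm x = w)).card = n.choose w := by
  have hpc := Finset.card_powersetCard w (univ : Finset (Fin n))
  rw [Finset.card_univ, Fintype.card_fin] at hpc
  rw [← hpc]
  refine Finset.card_bij (fun x _ => univ.filter fun i => x i ≠ 0) ?_ ?_ ?_
  · intro x hx
    simp only [Finset.mem_filter, Finset.mem_univ, true_and] at hx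
    simp [Finset.mem_powersetCard, ← hx, hammingNorm]
  · intro x hx y hy hxy
    funext i
    have h2 : (x i ≠ 0) ↔ (y i ≠ 0) := by
      have := Finset.ext_iff.mp hxy i
      simpa using this
    by_cases h : x i ≠ 0
    · rw [zmod2_eq_one h, zmod2_eq_one (h2.mp h)]
    · push_neg at h
      have : y i = 0 := by
        by_contra hy0
        exact (h2.mpr hy0) h
      rw [h, this]
  · intro s hs
    simp only [Finset.mem_powersetCard, Finset.mem_univ] at hs
    refine ⟨fun i => if i ∈ s then 1 else 0, ?_, ?_⟩
    · simp only [Finset.mem_filter, Finset.mem_univ, true_and, hammingNorm]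
      rw [← hs.2]
      congr 1
      ext i
      by_cases h : i ∈ s <;> simp [h]
    · ext i
      by_cases h : i ∈ s <;> simp [h]

private lemma P_perm_inv {n : ℕ} (c : ℝ) (y : (Fin n → ZMod 2) → (Fin n → ZMod 2))
    (x : Fin n → ZMod 2) (π : Equiv.Perm (Fin n)) :
    (∑ γ : Equiv.Perm (Fin n), ∑ u : Fin n → ZMod 2,
        if (fun i => y u (γ.symm i)) = (fun i => x (π i)) then c else 0)
    = ∑ γ : Equiv.Perm (Fin n), ∑ u : Fin n → ZMod 2,
        if (fun i => y u (γ.symm i)) = x then c else 0 := by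
  refine Fintype.sum_equiv ⟨fun γ => γ.trans π, fun γ => γ.trans π.symm,
    fun γ => by ext i; simp, fun γ => by ext i; simp⟩ _ _ ?_
  intro γ
  refine Finset.sum_congr rfl fun u _ => ?_
  congr 1
  simp only [eq_iff_iff]
  constructor
  · intro hyp
    funext i
    have := congrFun hyp (π.symm i)
    simpa using this
  · intro hyp
    funext i
    have := congrFun hyp (π i)
    simpa using this


/-- **Lemma 5 (channel-input shaping, block-Markov asymmetric channel
coding).**  Let `α ∈ (0,1)`, `δ ≥ 0`, and let `φ₂ : F₂ⁿ → F₂ⁿ` have shaping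
Hamming distance spectrum `W₂ = d_H(Vⁿ, φ₂(Vⁿ))` (for `Vⁿ` i.i.d. uniform)
whose distribution is within total variation `δ` of `Binom(n,α)`.  For `Uⁿ`
i.i.d. uniform on `F₂`, `X̃ⁿ = φ₂(Uⁿ) ⊕ Uⁿ`, and `Γ` a uniformly random
permutation of `{1,…,n}` independent of `Uⁿ`, the law of `Xⁿ = Γ(X̃ⁿ)` is
within total variation `δ` of the i.i.d. `Bern(α)` law. -/
theorem stmt15 (n : ℕ) (α δ : ℝ) (hα : α ∈ Set.Ioo (0 : ℝ) 1) (hδ0 : 0 ≤ δ)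
    (φ₂ : (Fin n → ZMod 2) → (Fin n → ZMod 2))
    (hδ : (1 / 2) * ∑ w ∈ Finset.range (n + 1),
        |((Finset.univ.filter
            (fun v : Fin n → ZMod 2 => hammingDist v (φ₂ v) = w)).card : ℝ)
              / 2 ^ n
          - (n.choose w : ℝ) * α ^ w * (1 - α) ^ (n - w)| ≤ δ) :
    (1 / 2) * ∑ x : Fin n → ZMod 2,
      |(∑ γ : Equiv.Perm (Fin n), ∑ u : Fin n → ZMod 2,
          if (fun i => (φ₂ u + u) (γ.symm i)) = x then
            (1 / (Fintype.card (Equiv.Perm (Fin n)) : ℝ)) * ((1 : ℝ) / 2 ^ n)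
          else 0)
        - α ^ (hammingNorm x) * (1 - α) ^ (n - hammingNorm x)| ≤ δ := by
  set c : ℝ := (1 / (Fintype.card (Equiv.Perm (Fin n)) : ℝ)) * ((1 : ℝ) / 2 ^ n) with hc
  set P : (Fin n → ZMod 2) → ℝ := fun x =>
    ∑ γ : Equiv.Perm (Fin n), ∑ u : Fin n → ZMod 2,
      if (fun i => (φ₂ u + u) (γ.symm i)) = x then c else 0 with hP
  -- the distance/norm identity
  have hdist : ∀ u : Fin n → ZMod 2, hammingDist u (φ₂ u) = hammingNorm (φ₂ u + u) := by
    intro u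
    rw [hammingDist_eq_hammingNorm]
    congr 1
    funext i
    have : ∀ a b : ZMod 2, -a + b = b + a := by decide
    exact this (u i) (φ₂ u i)
  -- sum of P over a weight class
  have hfiber : ∀ w : ℕ,
      ∑ x ∈ univ.filter (fun x : Fin n → ZMod 2 => hammingNorm x = w), P x
      = ((univ.filter (fun v : Fin n → ZMod 2 => hammingDist v (φ₂ v) = w)).card : ℝ)
          / 2 ^ n := by
    intro w
    have hswap : ∑ x ∈ univ.filter (fun x : Fin n → ZMod 2 => hammingNorm x = w), P x
        = ∑ γ : Equiv.Perm (Fin n), ∑ u : Fin n → ZMod 2,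
            ∑ x ∈ univ.filter (fun x : Fin n → ZMod 2 => hammingNorm x = w),
              (if (fun i => (φ₂ u + u) (γ.symm i)) = x then c else 0) := by
      rw [Finset.sum_comm]
      exact Finset.sum_congr rfl fun γ _ => Finset.sum_comm
    rw [hswap]
    have hinner : ∀ (γ : Equiv.Perm (Fin n)) (u : Fin n → ZMod 2),
        ∑ x ∈ univ.filter (fun x : Fin n → ZMod 2 => hammingNorm x = w),
            (if (fun i => (φ₂ u + u) (γ.symm i)) = x then c else 0)
        = if hammingDist u (φ₂ u) = w then c else 0 := by
      intro γ u
      rw [Finset.sum_ite_eq]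
      congr 1
      simp only [Finset.mem_filter, Finset.mem_univ, true_and, eq_iff_iff]
      rw [norm_perm (φ₂ u + u) γ.symm, hdist u]
    calc ∑ γ : Equiv.Perm (Fin n), ∑ u : Fin n → ZMod 2,
            ∑ x ∈ univ.filter (fun x : Fin n → ZMod 2 => hammingNorm x = w),
              (if (fun i => (φ₂ u + u) (γ.symm i)) = x then c else 0)
        = ∑ γ : Equiv.Perm (Fin n), ∑ u : Fin n → ZMod 2,
            (if hammingDist u (φ₂ u) = w then c else 0) := by
          exact Finset.sum_congr rfl fun γ _ => Finset.sum_congr rfl fun u _ => hinner γ u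
      _ = (Fintype.card (Equiv.Perm (Fin n)) : ℝ) *
            (((univ.filter (fun v : Fin n → ZMod 2 => hammingDist v (φ₂ v) = w)).card : ℝ) * c) := by
          rw [Finset.sum_const, Finset.card_univ, nsmul_eq_mul]
          congr 1
          rw [← Finset.sum_filter, Finset.sum_const, nsmul_eq_mul]
      _ = ((univ.filter (fun v : Fin n → ZMod 2 => hammingDist v (φ₂ v) = w)).card : ℝ) / 2 ^ n := by
          have hcard : (Fintype.card (Equiv.Perm (Fin n)) : ℝ) ≠ 0 := by
            exact_mod_cast Fintype.card_pos.ne'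
          have h2n : (2 : ℝ) ^ n ≠ 0 := by positivity
          rw [hc]
          field_simp
  -- constancy of P on weight classes
  have hconst : ∀ x x' : Fin n → ZMod 2, hammingNorm x = hammingNorm x' → P x = P x' := by
    intro x x' hxx
    obtain ⟨π, hπ⟩ := exists_perm x x' hxx
    have hfun : (fun i => x (π i)) = x' := funext hπ
    rw [hP]
    dsimp only
    rw [← hfun]
    exact (P_perm_inv c (fun u => φ₂ u + u) x π).symm
  -- regroup the main sum by weight
  have hmaps : ∀ x : Fin n → ZMod 2, x ∈ (univ : Finset (Fin n → ZMod 2)) →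
      hammingNorm x ∈ Finset.range (n + 1) := by
    intro x _
    rw [Finset.mem_range, Nat.lt_succ_iff]
    calc hammingNorm x ≤ Fintype.card (Fin n) := hammingNorm_le_card_fintype
      _ = n := Fintype.card_fin n
  have hregroup : ∑ x : Fin n → ZMod 2,
        |P x - α ^ (hammingNorm x) * (1 - α) ^ (n - hammingNorm x)|
      = ∑ w ∈ Finset.range (n + 1),
          ∑ x ∈ univ.filter (fun x : Fin n → ZMod 2 => hammingNorm x = w),
            |P x - α ^ (hammingNorm x) * (1 - α) ^ (n - hammingNorm x)| :=
    (Finset.sum_fiberwise_of_maps_to hmaps _).symm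
  -- per weight class computation
  have hclass : ∀ w ∈ Finset.range (n + 1),
      ∑ x ∈ univ.filter (fun x : Fin n → ZMod 2 => hammingNorm x = w),
          |P x - α ^ (hammingNorm x) * (1 - α) ^ (n - hammingNorm x)|
      = |((univ.filter (fun v : Fin n → ZMod 2 => hammingDist v (φ₂ v) = w)).card : ℝ)
            / 2 ^ n
          - (n.choose w : ℝ) * α ^ w * (1 - α) ^ (n - w)| := by
    intro w hw
    rw [Finset.mem_range, Nat.lt_succ_iff] at hw
    -- a canonical weight-w vector
    set x₀ : Fin n → ZMod 2 := fun i => if (i : ℕ) < w then 1 else 0 with hx₀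
    have hnorm₀ : hammingNorm x₀ = w := by
      unfold hammingNorm
      have : (univ.filter fun i : Fin n => x₀ i ≠ 0) = univ.filter fun i : Fin n => (i : ℕ) < w := by
        ext i
        by_cases h : (i : ℕ) < w <;> simp [hx₀, h]
      rw [this]
      conv_rhs => rw [← Finset.card_fin w]
      refine Finset.card_bij (fun i hi => (⟨(i : ℕ), by
        simp only [Finset.mem_filter] at hi; exact hi.2⟩ : Fin w)) ?_ ?_ ?_
      · intro a _; exact Finset.mem_univ _
      · intro a _ b _ hab
        have h2 := congrArg Fin.val hab
        simp only at h2
        exact Fin.val_injective h2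
      · intro b _
        refine ⟨⟨(b : ℕ), lt_of_lt_of_le b.2 hw⟩, ?_, rfl⟩
        simpa using b.2
    have hval : ∀ x ∈ univ.filter (fun x : Fin n → ZMod 2 => hammingNorm x = w),
        |P x - α ^ (hammingNorm x) * (1 - α) ^ (n - hammingNorm x)|
        = |P x₀ - α ^ w * (1 - α) ^ (n - w)| := by
      intro x hx
      simp only [Finset.mem_filter, Finset.mem_univ, true_and] at hx
      rw [hx, hconst x x₀ (by rw [hx, hnorm₀])]
    rw [Finset.sum_congr rfl hval, Finset.sum_const, card_weight, nsmul_eq_mul]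
    have habs : ((n.choose w : ℝ)) * |P x₀ - α ^ w * (1 - α) ^ (n - w)|
        = |(n.choose w : ℝ) * P x₀ - (n.choose w : ℝ) * (α ^ w * (1 - α) ^ (n - w))| := by
      rw [← mul_sub, abs_mul, abs_of_nonneg (by positivity : (0:ℝ) ≤ (n.choose w : ℝ))]
    rw [habs]
    have hPsum : (n.choose w : ℝ) * P x₀
        = ((univ.filter (fun v : Fin n → ZMod 2 => hammingDist v (φ₂ v) = w)).card : ℝ)
            / 2 ^ n := by
      rw [← hfiber w]
      rw [Finset.sum_congr rfl (fun x hx => by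
        simp only [Finset.mem_filter, Finset.mem_univ, true_and] at hx
        exact hconst x x₀ (by rw [hx, hnorm₀]))]
      rw [Finset.sum_const, card_weight, nsmul_eq_mul]
    rw [hPsum]
    ring_nf
  calc (1 / 2 : ℝ) * ∑ x : Fin n → ZMod 2,
        |P x - α ^ (hammingNorm x) * (1 - α) ^ (n - hammingNorm x)|
      = (1 / 2) * ∑ w ∈ Finset.range (n + 1),
          |((univ.filter (fun v : Fin n → ZMod 2 => hammingDist v (φ₂ v) = w)).card : ℝ)
              / 2 ^ n
            - (n.choose w : ℝ) * α ^ w * (1 - α) ^ (n - w)| := by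
        rw [hregroup, Finset.sum_congr rfl hclass]
    _ ≤ δ := hδ
end

section
/- Let p be a pmf on F₂² and δ ≥ 0. Let (X̃ⁿ, Ũⁿ) be a pair of random vectors in F₂ⁿ whose joint type T = type(X̃ⁿ,Ũⁿ) satisfies (1/2)·∑_{t} |P{T = t} − Multinomial(n;p)(t)| ≤ δ (the sum over all quadruples t of nonnegative integers summing to n). Let Γ be a uniformly random permutation of {1,…,n} independent of (X̃ⁿ,Ũⁿ), and set (Xⁿ,Uⁿ) = (Γ(X̃ⁿ), Γ(Ũⁿ)) (the same permutation applied to both vectors). Then (1/2)·∑_{xⁿ,uⁿ} |P{Xⁿ = xⁿ, Uⁿ = uⁿ} − ∏_{i=1}^{n} p(xᵢ,uᵢ)| ≤ δ. (Lemma 6: shaping via joint types in the block-Markov lossy source coding scheme.) -/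
/-- The joint type of a pair of binary vectors:
`jointType x u a b = #{i : xᵢ = a, uᵢ = b}`. -/
def jointType {n : ℕ} (x u : Fin n → ZMod 2) : ZMod 2 → ZMod 2 → ℕ :=
  fun a b => (Finset.univ.filter (fun i => x i = a ∧ u i = b)).card

/-- The multinomial pmf with `n` trials and cell probabilities `p` on `F₂²`,
evaluated at a quadruple `t` of counts (it vanishes unless `∑ t = n`). -/
noncomputable def multinomialPMF (n : ℕ) (p : ZMod 2 → ZMod 2 → ℝ)
    (t : ZMod 2 → ZMod 2 → ℕ) : ℝ :=
  if (∑ a : ZMod 2, ∑ b : ZMod 2, t a b) = n then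
    ((n.factorial : ℝ) / ∏ a : ZMod 2, ∏ b : ZMod 2, ((t a b).factorial : ℝ)) *
      ∏ a : ZMod 2, ∏ b : ZMod 2, p a b ^ (t a b)
  else 0

open Finset Equiv

section gen
set_option linter.unusedSectionVars false
variable {α ι : Type*} [Fintype α] [DecidableEq α] [Fintype ι] [DecidableEq ι]

/-- fiber count -/
def cnt (f : α → ι) (s : ι) : ℕ := #(Finset.univ.filter fun a => f a = s)

lemma cnt_comp (f : α → ι) (γ : Equiv.Perm α) : cnt (f ∘ γ) = cnt f := by
  funext s
  unfold cnt
  apply Finset.card_bij (fun a _ => γ a)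
  · intro a ha; simp_all
  · intro a _ b _ h; exact γ.injective h
  · intro b hb; exact ⟨γ.symm b, by simp_all, by simp⟩

lemma sum_cnt (f : α → ι) : ∑ s, cnt f s = Fintype.card α := by
  unfold cnt
  rw [← Finset.card_univ]
  exact (Finset.card_eq_sum_card_fiberwise (fun a _ => Finset.mem_univ (f a))).symm

lemma prod_cnt {M : Type*} [CommMonoid M] (f : α → ι) (p : ι → M) :
    ∏ a, p (f a) = ∏ s, p s ^ cnt f s := by
  rw [← Finset.prod_fiberwise_of_maps_to (fun a _ => Finset.mem_univ (f a)) (fun a => p (f a))]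
  refine Finset.prod_congr rfl fun s _ => ?_
  rw [Finset.prod_congr rfl (fun a ha => ?_), Finset.prod_const]
  · rfl
  · simp at ha; rw [ha]

lemma exists_perm_comp {f g : α → ι} (h : cnt f = cnt g) : ∃ γ : Equiv.Perm α, f ∘ γ = g := by
  have he : ∀ s : ι, { a // g a = s } ≃ { a // f a = s } := by
    intro s
    apply Fintype.equivOfCardEq
    have := congrFun h s
    unfold cnt at this
    simpa [Fintype.card_subtype] using this.symm
  refine ⟨Equiv.ofFiberEquiv he, ?_⟩
  funext a
  exact Equiv.ofFiberEquiv_map he a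

lemma card_stab (f : α → ι) :
    #(Finset.univ.filter fun γ : Equiv.Perm α => f ∘ γ = f) = ∏ s, (cnt f s).factorial := by
  have := DomMulAct.stabilizer_card f
  rw [Fintype.card_subtype] at this
  rw [this]
  refine Finset.prod_congr rfl fun s _ => ?_
  rw [Fintype.card_subtype]
  rfl

lemma card_transporter (f g : α → ι) :
    #(Finset.univ.filter fun γ : Equiv.Perm α => f ∘ γ = g) =
      if cnt f = cnt g then ∏ s, (cnt f s).factorial else 0 := by
  split_ifs with h
  · obtain ⟨γ₀, hγ₀⟩ := exists_perm_comp h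
    rw [← card_stab f]
    apply Finset.card_bij (fun γ _ => γ₀.symm.trans γ)
    · intro γ hγ
      simp only [Finset.mem_filter, Finset.mem_univ, true_and] at hγ ⊢
      funext a
      simp only [Function.comp_apply, Equiv.trans_apply]
      calc f (γ (γ₀.symm a)) = g (γ₀.symm a) := congrFun hγ _
        _ = f (γ₀ (γ₀.symm a)) := (congrFun hγ₀ _).symm
        _ = f a := by rw [Equiv.apply_symm_apply]
    · intro a _ b _ h
      have := congrArg (fun e => γ₀.trans e) h
      simpa [← Equiv.trans_assoc] using this
    · intro σ hσ
      simp only [Finset.mem_filter, Finset.mem_univ, true_and] at hσ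
      refine ⟨γ₀.trans σ, ?_, by ext a; simp⟩
      simp only [Finset.mem_filter, Finset.mem_univ, true_and]
      funext a
      simp only [Function.comp_apply, Equiv.trans_apply]
      calc f (σ (γ₀ a)) = f (γ₀ a) := congrFun hσ _
        _ = g a := congrFun hγ₀ _
  · rw [Finset.card_eq_zero, Finset.filter_eq_empty_iff]
    intro γ _
    intro hc
    exact h (by rw [← hc, cnt_comp])

lemma class_mul (f : α → ι) :
    #(Finset.univ.filter fun g : α → ι => cnt g = cnt f) * ∏ s, (cnt f s).factorial
      = (Fintype.card α).factorial := by
  have hdc : ∑ g : α → ι, #(Finset.univ.filter fun γ : Equiv.Perm α => f ∘ γ = g)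
      = (Fintype.card α).factorial := by
    rw [← Fintype.card_perm, ← Finset.card_univ]
    exact (Finset.card_eq_sum_card_fiberwise
      (fun (γ : Equiv.Perm α) _ => Finset.mem_univ (f ∘ γ))).symm
  rw [← hdc]
  rw [Finset.sum_congr rfl (fun g _ => card_transporter f g)]
  rw [Finset.sum_ite, Finset.sum_const, Finset.sum_const_zero, add_zero, smul_eq_mul]
  have : (Finset.univ.filter fun g : α → ι => cnt f = cnt g)
      = (Finset.univ.filter fun g : α → ι => cnt g = cnt f) := by
    apply Finset.filter_congr; intro g _; simp [eq_comm]
  rw [this]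

end gen

/-- pairing of two vectors -/
def pr {n : ℕ} (x u : Fin n → ZMod 2) : Fin n → ZMod 2 × ZMod 2 := fun i => (x i, u i)

lemma jointType_eq_cnt {n : ℕ} (x u : Fin n → ZMod 2) (a b : ZMod 2) :
    jointType x u a b = cnt (pr x u) (a, b) := by
  unfold jointType cnt pr
  congr 1
  apply Finset.filter_congr
  intro i _
  simp [Prod.ext_iff]

lemma jt_eq_iff {n : ℕ} (x u x' u' : Fin n → ZMod 2) :
    jointType x u = jointType x' u' ↔ cnt (pr x u) = cnt (pr x' u') := by
  constructor
  · intro h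
    funext s
    obtain ⟨a, b⟩ := s
    rw [← jointType_eq_cnt, ← jointType_eq_cnt, h]
  · intro h
    funext a b
    rw [jointType_eq_cnt, jointType_eq_cnt, h]

lemma pr_comp_eq_iff {n : ℕ} (x u x' u' : Fin n → ZMod 2) (γ : Equiv.Perm (Fin n)) :
    pr x u ∘ γ = pr x' u' ↔ ((x' = fun j => x (γ j)) ∧ (u' = fun j => u (γ j))) := by
  constructor
  · intro h
    constructor <;> funext j
    · exact (congrArg Prod.fst (congrFun h j)).symm
    · exact (congrArg Prod.snd (congrFun h j)).symm
  · rintro ⟨h1, h2⟩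
    subst h1; subst h2
    rfl

lemma double_delta {n : ℕ} (A B : Fin n → ZMod 2) (v : (Fin n → ZMod 2) → (Fin n → ZMod 2) → ℝ) :
    (∑ xt : Fin n → ZMod 2, ∑ ut : Fin n → ZMod 2,
      if xt = A ∧ ut = B then v xt ut else 0) = v A B := by
  rw [Finset.sum_eq_single A]
  · rw [Finset.sum_eq_single B]
    · simp
    · intro b _ hb; simp [hb]
    · simp
  · intro a _ ha
    apply Finset.sum_eq_zero
    intro ut _
    simp [ha]
  · simp

set_option maxHeartbeats 2000000 in
/-- **Lemma 6 (shaping via joint types, block-Markov lossy source coding).**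
Let `p` be a pmf on `F₂²` and `(X̃ⁿ,Ũⁿ)` a pair of random vectors (joint pmf
`q`) whose joint type `T = type(X̃ⁿ,Ũⁿ)` is within total variation `δ` of
`Multinomial(n;p)`.  If `Γ` is a uniformly random permutation of `{1,…,n}`
independent of `(X̃ⁿ,Ũⁿ)` and `(Xⁿ,Uⁿ) = (Γ(X̃ⁿ), Γ(Ũⁿ))`, then the joint
law of `(Xⁿ,Uⁿ)` is within total variation `δ` of `∏ᵢ p(xᵢ,uᵢ)`. -/
theorem stmt16 (n : ℕ) (δ : ℝ)
    (p : ZMod 2 → ZMod 2 → ℝ) (hp0 : ∀ a b, 0 ≤ p a b)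
    (hp1 : ∑ a : ZMod 2, ∑ b : ZMod 2, p a b = 1)
    (q : (Fin n → ZMod 2) → (Fin n → ZMod 2) → ℝ)
    (hq0 : ∀ x u, 0 ≤ q x u)
    (hq1 : ∑ x : Fin n → ZMod 2, ∑ u : Fin n → ZMod 2, q x u = 1)
    (hδ : (1 / 2) * ∑' t : ZMod 2 → ZMod 2 → ℕ,
        |(∑ x : Fin n → ZMod 2, ∑ u : Fin n → ZMod 2,
            if jointType x u = t then q x u else 0)
          - multinomialPMF n p t| ≤ δ) :
    (1 / 2) * ∑ x : Fin n → ZMod 2, ∑ u : Fin n → ZMod 2,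
      |(∑ γ : Equiv.Perm (Fin n),
          ∑ xt : Fin n → ZMod 2, ∑ ut : Fin n → ZMod 2,
          if (fun i => xt (γ.symm i)) = x ∧ (fun i => ut (γ.symm i)) = u then
            (1 / (Fintype.card (Equiv.Perm (Fin n)) : ℝ)) * q xt ut
          else 0)
        - ∏ i, p (x i) (u i)| ≤ δ := by

  classical
  set c : ℝ := 1 / (Fintype.card (Equiv.Perm (Fin n)) : ℝ) with hc
  have hcval : c = 1 / (n.factorial : ℝ) := by
    rw [hc, Fintype.card_perm, Fintype.card_fin]
  -- the law after permutation
  set PT : (ZMod 2 → ZMod 2 → ℕ) → ℝ :=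
    fun t => ∑ x : (Fin n → ZMod 2), ∑ u : (Fin n → ZMod 2), if jointType x u = t then q x u else 0 with hPT
  set G : (ZMod 2 → ZMod 2 → ℕ) → ℝ :=
    fun t => |PT t - multinomialPMF n p t| with hG
  set W : (ZMod 2 → ZMod 2 → ℕ) → ℝ :=
    fun t => (∏ a : ZMod 2, ∏ b : ZMod 2, ((t a b).factorial : ℝ)) / (n.factorial : ℝ) with hW
  have hnfac : (0 : ℝ) < (n.factorial : ℝ) := by positivity
  have hWK : ∀ x u : (Fin n → ZMod 2), W (jointType x u)
      = ((∏ s : ZMod 2 × ZMod 2, (cnt (pr x u) s).factorial : ℕ) : ℝ) / (n.factorial : ℝ) := by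
    intro x u
    rw [hW]
    push_cast
    rw [Fintype.prod_prod_type]
    congr 1
    exact Finset.prod_congr rfl fun a _ => Finset.prod_congr rfl fun b _ => by
      rw [jointType_eq_cnt]
  -- Step 1+2+3: the permuted law in terms of PT
  have hS : ∀ x u : (Fin n → ZMod 2),
      (∑ γ : Equiv.Perm (Fin n), ∑ xt : (Fin n → ZMod 2), ∑ ut : (Fin n → ZMod 2),
        if (fun i => xt (γ.symm i)) = x ∧ (fun i => ut (γ.symm i)) = u then c * q xt ut else 0)
      = W (jointType x u) * PT (jointType x u) := by
    intro x u
    have hcond : ∀ (γ : Equiv.Perm (Fin n)) (xt : (Fin n → ZMod 2)),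
        ((fun i => xt (γ.symm i)) = x) ↔ (xt = fun j => x (γ j)) := by
      intro γ xt
      constructor
      · intro h; funext j
        have := congrFun h (γ j)
        simpa using this
      · intro h; funext i; rw [h]; simp
    have hcond' : ∀ (γ : Equiv.Perm (Fin n)) (ut : (Fin n → ZMod 2)),
        ((fun i => ut (γ.symm i)) = u) ↔ (ut = fun j => u (γ j)) := by
      intro γ ut
      constructor
      · intro h; funext j
        have := congrFun h (γ j)
        simpa using this
      · intro h; funext i; rw [h]; simp
    have step1 : (∑ γ : Equiv.Perm (Fin n), ∑ xt : (Fin n → ZMod 2), ∑ ut : (Fin n → ZMod 2),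
        if (fun i => xt (γ.symm i)) = x ∧ (fun i => ut (γ.symm i)) = u then c * q xt ut else 0)
        = c * ∑ γ : Equiv.Perm (Fin n), q (fun j => x (γ j)) (fun j => u (γ j)) := by
      rw [Finset.mul_sum]
      refine Finset.sum_congr rfl fun γ _ => ?_
      simp only [hcond, hcond']
      exact double_delta _ _ (fun a b => c * q a b)
    have step2 : (∑ γ : Equiv.Perm (Fin n), q (fun j => x (γ j)) (fun j => u (γ j)))
        = ∑ x' : (Fin n → ZMod 2), ∑ u' : (Fin n → ZMod 2),
            ((#(Finset.univ.filter fun γ : Equiv.Perm (Fin n) => pr x u ∘ γ = pr x' u') : ℕ) : ℝ)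
              * q x' u' := by
      have e1 : ∀ x' u' : (Fin n → ZMod 2),
          ((#(Finset.univ.filter fun γ : Equiv.Perm (Fin n) => pr x u ∘ γ = pr x' u') : ℕ) : ℝ)
            * q x' u'
          = ∑ γ : Equiv.Perm (Fin n), if pr x u ∘ γ = pr x' u' then q x' u' else 0 := by
        intro x' u'
        rw [← Finset.sum_filter, Finset.sum_const, nsmul_eq_mul]
      symm
      calc (∑ x' : (Fin n → ZMod 2), ∑ u' : (Fin n → ZMod 2),
              ((#(Finset.univ.filter fun γ : Equiv.Perm (Fin n) => pr x u ∘ γ = pr x' u') : ℕ) : ℝ)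
                * q x' u')
          = ∑ x' : (Fin n → ZMod 2), ∑ u' : (Fin n → ZMod 2), ∑ γ : Equiv.Perm (Fin n),
              if pr x u ∘ γ = pr x' u' then q x' u' else 0 :=
            Finset.sum_congr rfl fun x' _ => Finset.sum_congr rfl fun u' _ => e1 x' u'
        _ = ∑ x' : (Fin n → ZMod 2), ∑ γ : Equiv.Perm (Fin n), ∑ u' : (Fin n → ZMod 2),
              if pr x u ∘ γ = pr x' u' then q x' u' else 0 :=
            Finset.sum_congr rfl fun x' _ => Finset.sum_comm
        _ = ∑ γ : Equiv.Perm (Fin n), ∑ x' : (Fin n → ZMod 2), ∑ u' : (Fin n → ZMod 2),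
              if pr x u ∘ γ = pr x' u' then q x' u' else 0 := Finset.sum_comm
        _ = ∑ γ : Equiv.Perm (Fin n), q (fun j => x (γ j)) (fun j => u (γ j)) := by
            refine Finset.sum_congr rfl fun γ _ => ?_
            have hiff : ∀ x' u' : (Fin n → ZMod 2), (if pr x u ∘ γ = pr x' u' then q x' u' else 0)
                = (if x' = (fun j => x (γ j)) ∧ u' = (fun j => u (γ j)) then q x' u' else 0) := by
              intro x' u'
              congr 1
              exact propext (pr_comp_eq_iff x u x' u' γ)
            rw [Finset.sum_congr rfl fun x' _ => Finset.sum_congr rfl fun u' _ => hiff x' u']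
            exact double_delta _ _ q
    rw [step1, step2]
    have e2 : ∀ x' u' : (Fin n → ZMod 2),
        ((#(Finset.univ.filter fun γ : Equiv.Perm (Fin n) => pr x u ∘ γ = pr x' u') : ℕ) : ℝ)
          * q x' u'
        = ((∏ s : ZMod 2 × ZMod 2, (cnt (pr x u) s).factorial : ℕ) : ℝ)
            * (if jointType x' u' = jointType x u then q x' u' else 0) := by
      intro x' u'
      rw [card_transporter]
      by_cases h : jointType x' u' = jointType x u
      · rw [if_pos h, if_pos]
        exact ((jt_eq_iff x u x' u').mp h.symm)
      · rw [if_neg h, if_neg, Nat.cast_zero, zero_mul, mul_zero]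
        intro hcnt
        exact h (((jt_eq_iff x u x' u').mpr hcnt).symm)
    rw [Finset.sum_congr rfl fun x' _ => Finset.sum_congr rfl fun u' _ => e2 x' u']
    simp only [← Finset.mul_sum]
    rw [hWK x u, hcval, hPT]
    field_simp
  -- Step 4: the product term
  have hprod : ∀ x u : (Fin n → ZMod 2),
      (∏ i, p (x i) (u i)) = W (jointType x u) * multinomialPMF n p (jointType x u) := by
    intro x u
    have hsum_t : (∑ a : ZMod 2, ∑ b : ZMod 2, jointType x u a b) = n := by
      have : (∑ a : ZMod 2, ∑ b : ZMod 2, jointType x u a b)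
          = ∑ s : ZMod 2 × ZMod 2, cnt (pr x u) s := by
        rw [Fintype.sum_prod_type]
        exact Finset.sum_congr rfl fun a _ => Finset.sum_congr rfl fun b _ =>
          (jointType_eq_cnt x u a b)
      rw [this, sum_cnt, Fintype.card_fin]
    have hP : (∏ i, p (x i) (u i))
        = ∏ a : ZMod 2, ∏ b : ZMod 2, p a b ^ (jointType x u a b) := by
      have := prod_cnt (pr x u) (fun s => p s.1 s.2)
      rw [show (∏ i, p (x i) (u i)) = ∏ i, (fun s : ZMod 2 × ZMod 2 => p s.1 s.2) (pr x u i)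
        from rfl, this, Fintype.prod_prod_type]
      exact Finset.prod_congr rfl fun a _ => Finset.prod_congr rfl fun b _ => by
        rw [jointType_eq_cnt]
    have hF : (0:ℝ) < ∏ a : ZMod 2, ∏ b : ZMod 2, ((jointType x u a b).factorial : ℝ) := by
      apply Finset.prod_pos
      intro a _
      apply Finset.prod_pos
      intro b _
      positivity
    rw [multinomialPMF, if_pos hsum_t, hP, hW]
    field_simp
  -- Step 5: pointwise identity
  have hmain : ∀ x u : (Fin n → ZMod 2),
      |(∑ γ : Equiv.Perm (Fin n), ∑ xt : (Fin n → ZMod 2), ∑ ut : (Fin n → ZMod 2),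
        if (fun i => xt (γ.symm i)) = x ∧ (fun i => ut (γ.symm i)) = u then c * q xt ut else 0)
        - ∏ i, p (x i) (u i)|
      = W (jointType x u) * G (jointType x u) := by
    intro x u
    rw [hS x u, hprod x u, ← mul_sub, abs_mul, hG]
    congr 1
    rw [abs_of_nonneg]
    rw [hW]
    positivity
  -- Step 6: group by type
  set jt : (Fin n → ZMod 2) × (Fin n → ZMod 2) → (ZMod 2 → ZMod 2 → ℕ) := fun z => jointType z.1 z.2 with hjt
  have hgroup : (∑ x : (Fin n → ZMod 2), ∑ u : (Fin n → ZMod 2), W (jointType x u) * G (jointType x u))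
      = ∑ t ∈ Finset.univ.image jt, G t := by
    have h0 : (∑ x : (Fin n → ZMod 2), ∑ u : (Fin n → ZMod 2), W (jointType x u) * G (jointType x u))
        = ∑ z : (Fin n → ZMod 2) × (Fin n → ZMod 2), (fun t => W t * G t) (jt z) :=
      (Fintype.sum_prod_type (f := fun z : (Fin n → ZMod 2) × (Fin n → ZMod 2) => (fun t => W t * G t) (jt z))).symm
    rw [h0, Finset.sum_comp (fun t => W t * G t) jt]
    refine Finset.sum_congr rfl fun t ht => ?_
    obtain ⟨z₀, _, hz₀⟩ := Finset.mem_image.mp ht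
    have hcard : #(Finset.univ.filter fun z : (Fin n → ZMod 2) × (Fin n → ZMod 2) => jt z = t)
        = #(Finset.univ.filter fun g : Fin n → ZMod 2 × ZMod 2 => cnt g = cnt (pr z₀.1 z₀.2)) := by
      apply Finset.card_bij (fun z _ => pr z.1 z.2)
      · intro z hz
        simp only [Finset.mem_filter, Finset.mem_univ, true_and] at hz ⊢
        exact (jt_eq_iff z.1 z.2 z₀.1 z₀.2).mp (hz.trans hz₀.symm)
      · intro z _ z' _ h
        have h1 : z.1 = z'.1 := funext fun i => congrArg Prod.fst (congrFun h i)
        have h2 : z.2 = z'.2 := funext fun i => congrArg Prod.snd (congrFun h i)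
        exact Prod.ext h1 h2
      · intro g hg
        simp only [Finset.mem_filter, Finset.mem_univ, true_and] at hg
        refine ⟨((fun i => (g i).1), (fun i => (g i).2)), ?_, ?_⟩
        · simp only [Finset.mem_filter, Finset.mem_univ, true_and]
          rw [← hz₀]
          apply (jt_eq_iff _ _ z₀.1 z₀.2).mpr
          have : pr (fun i => (g i).1) (fun i => (g i).2) = g := by
            funext i; rfl
          rw [this, hg]
        · funext i; rfl
    have hclass := class_mul (pr z₀.1 z₀.2)
    rw [Fintype.card_fin] at hclass
    have hWt : W t = ((∏ s : ZMod 2 × ZMod 2, (cnt (pr z₀.1 z₀.2) s).factorial : ℕ) : ℝ)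
        / (n.factorial : ℝ) := by
      rw [← hz₀]
      exact hWK z₀.1 z₀.2
    have hone : ((#(Finset.univ.filter fun z : (Fin n → ZMod 2) × (Fin n → ZMod 2) => jt z = t) : ℕ) : ℝ) * W t = 1 := by
      rw [hcard, hWt]
      rw [mul_div_assoc']
      rw [div_eq_one_iff_eq (ne_of_gt hnfac)]
      exact_mod_cast hclass
    rw [nsmul_eq_mul, ← mul_assoc, hone, one_mul]
  -- Step 7: rewrite the goal and bound via tsum
  have hrw : (∑ x : (Fin n → ZMod 2), ∑ u : (Fin n → ZMod 2),
      |(∑ γ : Equiv.Perm (Fin n), ∑ xt : (Fin n → ZMod 2), ∑ ut : (Fin n → ZMod 2),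
        if (fun i => xt (γ.symm i)) = x ∧ (fun i => ut (γ.symm i)) = u then c * q xt ut else 0)
        - ∏ i, p (x i) (u i)|) = ∑ t ∈ Finset.univ.image jt, G t := by
    rw [Finset.sum_congr rfl fun x _ => Finset.sum_congr rfl fun u _ => hmain x u, hgroup]
  -- summability / cover set
  set coverB : Finset (ZMod 2 → ZMod 2 → ℕ) :=
    (Finset.univ : Finset (ZMod 2 → ZMod 2 → Fin (n+1))).image
      (fun v => fun a b => ((v a b : ℕ))) with hcoverB
  have hvanish : ∀ t ∉ (Finset.univ.image jt ∪ coverB), G t = 0 := by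
    intro t ht
    rw [Finset.mem_union, not_or] at ht
    obtain ⟨ht1, ht2⟩ := ht
    have hPT0 : PT t = 0 := by
      simp only [hPT]
      apply Finset.sum_eq_zero
      intro x _
      apply Finset.sum_eq_zero
      intro u _
      rw [if_neg]
      intro h
      exact ht1 (Finset.mem_image.mpr ⟨(x, u), Finset.mem_univ _, h⟩)
    have hM0 : multinomialPMF n p t = 0 := by
      rw [multinomialPMF]
      rw [if_neg]
      intro hsn
      apply ht2
      have hle : ∀ a b : ZMod 2, t a b ≤ n := by
        intro a b
        calc t a b ≤ ∑ b' : ZMod 2, t a b' :=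
              Finset.single_le_sum (fun _ _ => Nat.zero_le _) (Finset.mem_univ b)
          _ ≤ ∑ a' : ZMod 2, ∑ b' : ZMod 2, t a' b' :=
              Finset.single_le_sum (f := fun a' => ∑ b' : ZMod 2, t a' b')
                (fun _ _ => Nat.zero_le _) (Finset.mem_univ a)
          _ = n := hsn
      rw [hcoverB]
      apply Finset.mem_image.mpr
      refine ⟨fun a b => ⟨t a b, Nat.lt_succ_of_le (hle a b)⟩, Finset.mem_univ _, ?_⟩
      funext a b
      rfl
    simp only [hG, hPT0, hM0]
    simp
  have hsummable : Summable G := summable_of_ne_finset_zero hvanish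
  have hle2 : ∑ t ∈ Finset.univ.image jt, G t ≤ ∑' t, G t :=
    Summable.sum_le_tsum _ (fun t _ => by rw [hG]; exact abs_nonneg _) hsummable
  have hδ' : (1 / 2) * ∑' t, G t ≤ δ := by
    simpa only [hG, hPT] using hδ
  rw [hrw]
  calc (1 / 2) * ∑ t ∈ Finset.univ.image jt, G t
      ≤ (1 / 2) * ∑' t, G t := by linarith
    _ ≤ δ := hδ'
end

section
/- Let M₁ and M₂ be independent and uniform on ℳ₁ and ℳ₂ respectively, set X₁ⁿ = g₁(M₁) and X₂ⁿ = g₂(M₂), and conditionally on (X₁ⁿ,X₂ⁿ) let Y₁,…,Yₙ be independent with Yᵢ ~ p(·|X₁ᵢ,X₂ᵢ). Decode M̂₁ = ψ₁(Yⁿ) and M̂₂ = ψ₂(Yⁿ, g₁(M̂₁)). Then P{M̂₁ ≠ M₁ or M̂₂ ≠ M₂} ≤ ε₁ + ε₂ + δ₁ + δ₂. (Error guarantee of the successive-cancellation multiple access channel coding scheme built from two asymmetric channel codes.) -/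
open Finset

private lemma tv_bound' {α : Type} [Fintype α] (q p f : α → ℝ)
    (hf0 : ∀ a, 0 ≤ f a) (hf1 : ∀ a, f a ≤ 1)
    (hsum : ∑ a, q a = ∑ a, p a) :
    ∑ a, q a * f a ≤ (∑ a, p a * f a) + (1/2) * ∑ a, |q a - p a| := by
  have key : ∀ a ∈ Finset.univ (α := α), q a * f a ≤ p a * f a + (|q a - p a| + (q a - p a)) / 2 := by
    intro a _
    rcases abs_cases (q a - p a) with ⟨h1, h2⟩ | ⟨h1, h2⟩ <;> nlinarith [hf0 a, hf1 a]
  have h0 : ∑ a, (q a - p a) = 0 := by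
    rw [Finset.sum_sub_distrib, hsum]; ring
  calc ∑ a, q a * f a ≤ ∑ a, (p a * f a + (|q a - p a| + (q a - p a)) / 2) :=
        Finset.sum_le_sum key
    _ = (∑ a, p a * f a) + ((∑ a, |q a - p a|) + ∑ a, (q a - p a)) / 2 := by
        rw [Finset.sum_add_distrib, ← Finset.sum_div, Finset.sum_add_distrib]
    _ = (∑ a, p a * f a) + (1/2) * ∑ a, |q a - p a| := by rw [h0]; ring

private lemma fiber_sum' {α β : Type} [Fintype α] [Fintype β] [DecidableEq β]
    (g : α → β) (c : ℝ) (h : β → ℝ) :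
    ∑ a, c * h (g a) = ∑ b, (∑ a, if g a = b then c else 0) * h b := by
  have step : ∀ a : α, c * h (g a) = ∑ b, if g a = b then c * h b else 0 := by
    intro a; simp
  calc ∑ a, c * h (g a) = ∑ a, ∑ b, if g a = b then c * h b else 0 :=
        Finset.sum_congr rfl fun a _ => step a
    _ = ∑ b, ∑ a, if g a = b then c * h b else 0 := Finset.sum_comm
    _ = ∑ b, (∑ a, if g a = b then c else 0) * h b := by
        refine Finset.sum_congr rfl fun b _ => ?_
        rw [Finset.sum_mul]
        exact Finset.sum_congr rfl fun a _ => by split_ifs <;> ring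

private lemma prod_sum_pi {n : ℕ} {α : Type} [Fintype α]
    (f : Fin n → α → ℝ) :
    ∏ i, ∑ a : α, f i a = ∑ x : Fin n → α, ∏ i, f i (x i) := by
  classical
  rw [Finset.prod_univ_sum]
  rw [Fintype.piFinset_univ]

/-- **Successive-cancellation MAC coding from two asymmetric channel codes.**
With `M₁, M₂` independent uniform messages, `X₁ⁿ = g₁(M₁)`, `X₂ⁿ = g₂(M₂)`,
`Yⁿ` the output of the MAC `p(y|x₁,x₂)`, and decoding
`M̂₁ = ψ₁(Yⁿ)`, `M̂₂ = ψ₂(Yⁿ, g₁(M̂₁))`: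
`P{M̂₁ ≠ M₁ or M̂₂ ≠ M₂} ≤ ε₁ + ε₂ + δ₁ + δ₂`, where `ε₁` (resp. `ε₂`) is
the error probability of code 1 (resp. code 2) over the induced channel
`p(y|x₁) = ∑_{x₂} p(x₂)p(y|x₁,x₂)` (resp. `p(y,x₁|x₂) = p(x₁)p(y|x₁,x₂)`),
and `δ₁, δ₂` are the total variation distances of the codeword laws from the
target i.i.d. input laws `p(x₁)`, `p(x₂)`. -/
theorem stmt17 (n : ℕ) (𝒴 : Type) [Fintype 𝒴]
    (ch : ZMod 2 → ZMod 2 → 𝒴 → ℝ) (hch0 : ∀ x₁ x₂ y, 0 ≤ ch x₁ x₂ y)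
    (hch1 : ∀ x₁ x₂, ∑ y : 𝒴, ch x₁ x₂ y = 1)
    (p1 p2 : ZMod 2 → ℝ) (hp10 : ∀ x, 0 ≤ p1 x) (hp11 : ∑ x : ZMod 2, p1 x = 1)
    (hp20 : ∀ x, 0 ≤ p2 x) (hp21 : ∑ x : ZMod 2, p2 x = 1)
    (M₁ M₂ : Type) [Fintype M₁] [DecidableEq M₁] [Nonempty M₁]
    [Fintype M₂] [DecidableEq M₂] [Nonempty M₂]
    (g₁ : M₁ → (Fin n → ZMod 2)) (ψ₁ : (Fin n → 𝒴) → M₁)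
    (g₂ : M₂ → (Fin n → ZMod 2)) (ψ₂ : (Fin n → 𝒴) → (Fin n → ZMod 2) → M₂)
    (ε₁ ε₂ δ₁ δ₂ : ℝ)
    (hε₁ : ∑ m₁ : M₁, ∑ y : Fin n → 𝒴,
        (if ψ₁ y ≠ m₁ then
          (1 / (Fintype.card M₁ : ℝ)) *
            ∏ i, (∑ x₂ : ZMod 2, p2 x₂ * ch (g₁ m₁ i) x₂ (y i))
        else 0) = ε₁)
    (hδ₁ : (1 / 2) * ∑ x₁ : Fin n → ZMod 2,
        |(∑ m₁ : M₁, if g₁ m₁ = x₁ then (1 / (Fintype.card M₁ : ℝ)) else 0)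
          - ∏ i, p1 (x₁ i)| = δ₁)
    (hε₂ : ∑ m₂ : M₂, ∑ y : Fin n → 𝒴, ∑ x₁ : Fin n → ZMod 2,
        (if ψ₂ y x₁ ≠ m₂ then
          (1 / (Fintype.card M₂ : ℝ)) *
            ∏ i, (p1 (x₁ i) * ch (x₁ i) (g₂ m₂ i) (y i))
        else 0) = ε₂)
    (hδ₂ : (1 / 2) * ∑ x₂ : Fin n → ZMod 2,
        |(∑ m₂ : M₂, if g₂ m₂ = x₂ then (1 / (Fintype.card M₂ : ℝ)) else 0)
          - ∏ i, p2 (x₂ i)| = δ₂) :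
    ∑ m₁ : M₁, ∑ m₂ : M₂, ∑ y : Fin n → 𝒴,
      (if ψ₁ y ≠ m₁ ∨ ψ₂ y (g₁ (ψ₁ y)) ≠ m₂ then
        (1 / (Fintype.card M₁ : ℝ)) * (1 / (Fintype.card M₂ : ℝ)) *
          ∏ i, ch (g₁ m₁ i) (g₂ m₂ i) (y i)
      else 0) ≤ ε₁ + ε₂ + δ₁ + δ₂ := by
  classical
  set K₁ : ℝ := 1 / (Fintype.card M₁ : ℝ) with hK₁def
  set K₂ : ℝ := 1 / (Fintype.card M₂ : ℝ) with hK₂def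
  have hcard₁ : (Fintype.card M₁ : ℝ) ≠ 0 :=
    Nat.cast_ne_zero.mpr (Fintype.card_pos (α := M₁)).ne'
  have hcard₂ : (Fintype.card M₂ : ℝ) ≠ 0 :=
    Nat.cast_ne_zero.mpr (Fintype.card_pos (α := M₂)).ne'
  have hK₁0 : 0 ≤ K₁ := by rw [hK₁def]; positivity
  have hK₂0 : 0 ≤ K₂ := by rw [hK₂def]; positivity
  have hK₁sum : ∑ _m₁ : M₁, K₁ = 1 := by
    rw [Finset.sum_const, Finset.card_univ, nsmul_eq_mul, hK₁def]
    field_simp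
  have hK₂sum : ∑ _m₂ : M₂, K₂ = 1 := by
    rw [Finset.sum_const, Finset.card_univ, nsmul_eq_mul, hK₂def]
    field_simp
  have hchseq : ∀ a b : Fin n → ZMod 2,
      ∑ y : Fin n → 𝒴, ∏ i, ch (a i) (b i) (y i) = 1 := by
    intro a b
    rw [← prod_sum_pi (fun i t => ch (a i) (b i) t)]
    simp [hch1]
  set F : (Fin n → ZMod 2) → ℝ := fun x₂ => ∑ m₁ : M₁, ∑ y : Fin n → 𝒴,
      if ψ₁ y ≠ m₁ then K₁ * ∏ i, ch (g₁ m₁ i) (x₂ i) (y i) else 0 with hFdef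
  set G : (Fin n → ZMod 2) → ℝ := fun x₁ => ∑ m₂ : M₂, ∑ y : Fin n → 𝒴,
      if ψ₂ y x₁ ≠ m₂ then K₂ * ∏ i, ch (x₁ i) (g₂ m₂ i) (y i) else 0 with hGdef
  have hF0 : ∀ x₂, 0 ≤ F x₂ := by
    intro x₂
    refine Finset.sum_nonneg fun m₁ _ => Finset.sum_nonneg fun y _ => ?_
    split_ifs with h
    · exact mul_nonneg hK₁0 (Finset.prod_nonneg fun i _ => hch0 _ _ _)
    · exact le_refl 0
  have hG0 : ∀ x₁, 0 ≤ G x₁ := by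
    intro x₁
    refine Finset.sum_nonneg fun m₂ _ => Finset.sum_nonneg fun y _ => ?_
    split_ifs with h
    · exact mul_nonneg hK₂0 (Finset.prod_nonneg fun i _ => hch0 _ _ _)
    · exact le_refl 0
  have hF1 : ∀ x₂, F x₂ ≤ 1 := by
    intro x₂
    calc F x₂ ≤ ∑ m₁ : M₁, ∑ y : Fin n → 𝒴, K₁ * ∏ i, ch (g₁ m₁ i) (x₂ i) (y i) := by
          refine Finset.sum_le_sum fun m₁ _ => Finset.sum_le_sum fun y _ => ?_
          split_ifs with h
          · exact le_refl _
          · exact mul_nonneg hK₁0 (Finset.prod_nonneg fun i _ => hch0 _ _ _)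
      _ = ∑ _m₁ : M₁, K₁ := by
          refine Finset.sum_congr rfl fun m₁ _ => ?_
          rw [← Finset.mul_sum, hchseq, mul_one]
      _ = 1 := hK₁sum
  have hG1 : ∀ x₁, G x₁ ≤ 1 := by
    intro x₁
    calc G x₁ ≤ ∑ m₂ : M₂, ∑ y : Fin n → 𝒴, K₂ * ∏ i, ch (x₁ i) (g₂ m₂ i) (y i) := by
          refine Finset.sum_le_sum fun m₂ _ => Finset.sum_le_sum fun y _ => ?_
          split_ifs with h
          · exact le_refl _
          · exact mul_nonneg hK₂0 (Finset.prod_nonneg fun i _ => hch0 _ _ _)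
      _ = ∑ _m₂ : M₂, K₂ := by
          refine Finset.sum_congr rfl fun m₂ _ => ?_
          rw [← Finset.mul_sum, hchseq, mul_one]
      _ = 1 := hK₂sum
  -- Step 1: union bound
  have hunion : ∑ m₁ : M₁, ∑ m₂ : M₂, ∑ y : Fin n → 𝒴,
      (if ψ₁ y ≠ m₁ ∨ ψ₂ y (g₁ (ψ₁ y)) ≠ m₂ then
        K₁ * K₂ * ∏ i, ch (g₁ m₁ i) (g₂ m₂ i) (y i) else 0)
      ≤ (∑ m₂ : M₂, K₂ * F (g₂ m₂)) + (∑ m₁ : M₁, K₁ * G (g₁ m₁)) := by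
    have hT₁ : ∑ m₂ : M₂, K₂ * F (g₂ m₂)
        = ∑ m₁ : M₁, ∑ m₂ : M₂, ∑ y : Fin n → 𝒴,
          (if ψ₁ y ≠ m₁ then K₁ * K₂ * ∏ i, ch (g₁ m₁ i) (g₂ m₂ i) (y i) else 0) := by
      rw [Finset.sum_comm]
      refine Finset.sum_congr rfl fun m₂ _ => ?_
      rw [hFdef]
      simp only [Finset.mul_sum]
      refine Finset.sum_congr rfl fun m₁ _ => Finset.sum_congr rfl fun y _ => ?_
      split_ifs <;> ring
    have hT₂ : ∑ m₁ : M₁, K₁ * G (g₁ m₁)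
        = ∑ m₁ : M₁, ∑ m₂ : M₂, ∑ y : Fin n → 𝒴,
          (if ψ₂ y (g₁ m₁) ≠ m₂ then K₁ * K₂ * ∏ i, ch (g₁ m₁ i) (g₂ m₂ i) (y i) else 0) := by
      refine Finset.sum_congr rfl fun m₁ _ => ?_
      rw [hGdef]
      simp only [Finset.mul_sum]
      refine Finset.sum_congr rfl fun m₂ _ => Finset.sum_congr rfl fun y _ => ?_
      split_ifs <;> ring
    rw [hT₁, hT₂, ← Finset.sum_add_distrib]
    refine Finset.sum_le_sum fun m₁ _ => ?_
    rw [← Finset.sum_add_distrib]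
    refine Finset.sum_le_sum fun m₂ _ => ?_
    rw [← Finset.sum_add_distrib]
    refine Finset.sum_le_sum fun y _ => ?_
    have hc : 0 ≤ K₁ * K₂ * ∏ i, ch (g₁ m₁ i) (g₂ m₂ i) (y i) :=
      mul_nonneg (mul_nonneg hK₁0 hK₂0) (Finset.prod_nonneg fun i _ => hch0 _ _ _)
    by_cases hA : ψ₁ y = m₁
    · rw [hA]
      simp only [ne_eq, not_true_eq_false, false_or, if_false]
      split_ifs with h
      · linarith
      · linarith
    · have hA' : ψ₁ y ≠ m₁ := hA
      rw [if_pos hA', if_pos (Or.inl hA')]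
      split_ifs with h
      · linarith
      · linarith
  -- Step 2: fiber decomposition
  have hS₁ : ∑ m₂ : M₂, K₂ * F (g₂ m₂)
      = ∑ x₂ : Fin n → ZMod 2, (∑ m₂ : M₂, if g₂ m₂ = x₂ then K₂ else 0) * F x₂ :=
    fiber_sum' g₂ K₂ F
  have hS₂ : ∑ m₁ : M₁, K₁ * G (g₁ m₁)
      = ∑ x₁ : Fin n → ZMod 2, (∑ m₁ : M₁, if g₁ m₁ = x₁ then K₁ else 0) * G x₁ :=
    fiber_sum' g₁ K₁ G
  -- Step 3: normalization
  have hq₂sum : ∑ x₂ : Fin n → ZMod 2, (∑ m₂ : M₂, if g₂ m₂ = x₂ then K₂ else 0)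
      = ∑ x₂ : Fin n → ZMod 2, ∏ i, p2 (x₂ i) := by
    have h1 : ∑ x₂ : Fin n → ZMod 2, (∑ m₂ : M₂, if g₂ m₂ = x₂ then K₂ else 0) = 1 := by
      rw [Finset.sum_comm]
      simp [hK₂sum]
    have h2 : ∑ x₂ : Fin n → ZMod 2, ∏ i, p2 (x₂ i) = 1 := by
      rw [← prod_sum_pi (fun _ t => p2 t)]
      simp [hp21]
    rw [h1, h2]
  have hq₁sum : ∑ x₁ : Fin n → ZMod 2, (∑ m₁ : M₁, if g₁ m₁ = x₁ then K₁ else 0)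
      = ∑ x₁ : Fin n → ZMod 2, ∏ i, p1 (x₁ i) := by
    have h1 : ∑ x₁ : Fin n → ZMod 2, (∑ m₁ : M₁, if g₁ m₁ = x₁ then K₁ else 0) = 1 := by
      rw [Finset.sum_comm]
      simp [hK₁sum]
    have h2 : ∑ x₁ : Fin n → ZMod 2, ∏ i, p1 (x₁ i) = 1 := by
      rw [← prod_sum_pi (fun _ t => p1 t)]
      simp [hp11]
    rw [h1, h2]
  -- Step 4: identify ε₁ and ε₂
  have hε₁' : ∑ x₂ : Fin n → ZMod 2, (∏ i, p2 (x₂ i)) * F x₂ = ε₁ := by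
    rw [← hε₁]
    calc ∑ x₂ : Fin n → ZMod 2, (∏ i, p2 (x₂ i)) * F x₂
        = ∑ x₂ : Fin n → ZMod 2, ∑ m₁ : M₁, ∑ y : Fin n → 𝒴,
            (if ψ₁ y ≠ m₁ then
              (∏ i, p2 (x₂ i)) * (K₁ * ∏ i, ch (g₁ m₁ i) (x₂ i) (y i)) else 0) := by
          refine Finset.sum_congr rfl fun x₂ _ => ?_
          rw [hFdef]
          simp only [Finset.mul_sum]
          refine Finset.sum_congr rfl fun m₁ _ => Finset.sum_congr rfl fun y _ => ?_
          split_ifs <;> ring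
      _ = ∑ m₁ : M₁, ∑ y : Fin n → 𝒴, ∑ x₂ : Fin n → ZMod 2,
            (if ψ₁ y ≠ m₁ then
              (∏ i, p2 (x₂ i)) * (K₁ * ∏ i, ch (g₁ m₁ i) (x₂ i) (y i)) else 0) := by
          rw [Finset.sum_comm]
          exact Finset.sum_congr rfl fun m₁ _ => Finset.sum_comm
      _ = ∑ m₁ : M₁, ∑ y : Fin n → 𝒴,
            (if ψ₁ y ≠ m₁ then
              K₁ * ∏ i, (∑ x₂ : ZMod 2, p2 x₂ * ch (g₁ m₁ i) x₂ (y i)) else 0) := by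
          refine Finset.sum_congr rfl fun m₁ _ => Finset.sum_congr rfl fun y _ => ?_
          by_cases hP : ψ₁ y ≠ m₁
          · rw [if_pos hP]
            rw [Finset.sum_ite_of_true (fun _ _ => hP)]
            rw [prod_sum_pi (fun i t => p2 t * ch (g₁ m₁ i) t (y i)), Finset.mul_sum]
            refine Finset.sum_congr rfl fun x₂ _ => ?_
            rw [Finset.prod_mul_distrib]; ring
          · rw [if_neg hP]
            exact Finset.sum_eq_zero fun x₂ _ => if_neg hP
  have hε₂' : ∑ x₁ : Fin n → ZMod 2, (∏ i, p1 (x₁ i)) * G x₁ = ε₂ := by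
    rw [← hε₂]
    calc ∑ x₁ : Fin n → ZMod 2, (∏ i, p1 (x₁ i)) * G x₁
        = ∑ x₁ : Fin n → ZMod 2, ∑ m₂ : M₂, ∑ y : Fin n → 𝒴,
            (if ψ₂ y x₁ ≠ m₂ then
              (∏ i, p1 (x₁ i)) * (K₂ * ∏ i, ch (x₁ i) (g₂ m₂ i) (y i)) else 0) := by
          refine Finset.sum_congr rfl fun x₁ _ => ?_
          rw [hGdef]
          simp only [Finset.mul_sum]
          refine Finset.sum_congr rfl fun m₂ _ => Finset.sum_congr rfl fun y _ => ?_
          split_ifs <;> ring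
      _ = ∑ m₂ : M₂, ∑ y : Fin n → 𝒴, ∑ x₁ : Fin n → ZMod 2,
            (if ψ₂ y x₁ ≠ m₂ then
              (∏ i, p1 (x₁ i)) * (K₂ * ∏ i, ch (x₁ i) (g₂ m₂ i) (y i)) else 0) := by
          rw [Finset.sum_comm]
          exact Finset.sum_congr rfl fun m₂ _ => Finset.sum_comm
      _ = ∑ m₂ : M₂, ∑ y : Fin n → 𝒴, ∑ x₁ : Fin n → ZMod 2,
            (if ψ₂ y x₁ ≠ m₂ then
              K₂ * ∏ i, (p1 (x₁ i) * ch (x₁ i) (g₂ m₂ i) (y i)) else 0) := by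
          refine Finset.sum_congr rfl fun m₂ _ => Finset.sum_congr rfl fun y _ =>
            Finset.sum_congr rfl fun x₁ _ => ?_
          split_ifs with h
          · rw [Finset.prod_mul_distrib]; ring
          · rfl
  -- Step 5: TV bounds
  have hb₁ := tv_bound' (fun x₂ => ∑ m₂ : M₂, if g₂ m₂ = x₂ then K₂ else 0)
      (fun x₂ => ∏ i, p2 (x₂ i)) F hF0 hF1 hq₂sum
  have hb₂ := tv_bound' (fun x₁ => ∑ m₁ : M₁, if g₁ m₁ = x₁ then K₁ else 0)
      (fun x₁ => ∏ i, p1 (x₁ i)) G hG0 hG1 hq₁sum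
  calc ∑ m₁ : M₁, ∑ m₂ : M₂, ∑ y : Fin n → 𝒴,
      (if ψ₁ y ≠ m₁ ∨ ψ₂ y (g₁ (ψ₁ y)) ≠ m₂ then
        K₁ * K₂ * ∏ i, ch (g₁ m₁ i) (g₂ m₂ i) (y i) else 0)
      ≤ (∑ m₂ : M₂, K₂ * F (g₂ m₂)) + (∑ m₁ : M₁, K₁ * G (g₁ m₁)) := hunion
    _ = (∑ x₂ : Fin n → ZMod 2, (∑ m₂ : M₂, if g₂ m₂ = x₂ then K₂ else 0) * F x₂)
        + (∑ x₁ : Fin n → ZMod 2, (∑ m₁ : M₁, if g₁ m₁ = x₁ then K₁ else 0) * G x₁) := by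
        rw [hS₁, hS₂]
    _ ≤ ((∑ x₂ : Fin n → ZMod 2, (∏ i, p2 (x₂ i)) * F x₂)
          + (1/2) * ∑ x₂ : Fin n → ZMod 2,
              |(∑ m₂ : M₂, if g₂ m₂ = x₂ then K₂ else 0) - ∏ i, p2 (x₂ i)|)
        + ((∑ x₁ : Fin n → ZMod 2, (∏ i, p1 (x₁ i)) * G x₁)
          + (1/2) * ∑ x₁ : Fin n → ZMod 2,
              |(∑ m₁ : M₁, if g₁ m₁ = x₁ then K₁ else 0) - ∏ i, p1 (x₁ i)|) :=
        add_le_add hb₁ hb₂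
    _ = ε₁ + ε₂ + δ₁ + δ₂ := by
        rw [hε₁', hε₂', hδ₁, hδ₂]; ring
end

section
/- Let ℳ₁ and ℳ₂ be finite sets, g₁: ℳ₁ → F₂ⁿ, g₂: ℳ₂ × F₂ⁿ → F₂ⁿ, and let M₁ and M₂ be independent uniform random variables on ℳ₁ and ℳ₂. Assume: (i) (1/2)∑_{x₁ⁿ} |P{g₁(M₁) = x₁ⁿ} − ∏ᵢ p(x₁ᵢ)| ≤ δ₁; and (ii) for X̃₁ⁿ i.i.d. with law p(x₁) and independent of M₂, (1/2)∑_{x₁ⁿ,x₂ⁿ} |P{X̃₁ⁿ = x₁ⁿ, g₂(M₂,X̃₁ⁿ) = x₂ⁿ} − ∏ᵢ p(x₁ᵢ,x₂ᵢ)| ≤ δ₂. Then, with X₁ⁿ = g₁(M₁) and X₂ⁿ = g₂(M₂, X₁ⁿ): (1/2)∑_{x₁ⁿ,x₂ⁿ} |P{X₁ⁿ = x₁ⁿ, X₂ⁿ = x₂ⁿ} − ∏ᵢ p(x₁ᵢ,x₂ᵢ)| ≤ δ₁ + δ₂. (Channel-input shaping guarantee of the Marton coding scheme: the pair of transmitted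 sequences is within δ₁+δ₂ of the target i.i.d. input distribution.) -/
/-- **Channel-input shaping in Marton coding.**  Let `p(x₁,x₂)` be a pmf on
`F₂²` with first marginal `p(x₁)`.  With `M₁, M₂` independent uniform,
`X₁ⁿ = g₁(M₁)`, `X₂ⁿ = g₂(M₂, X₁ⁿ)`, and assuming (i) the law of `g₁(M₁)`
is within total variation `δ₁` of `∏ᵢ p(x₁ᵢ)`, and (ii) for `X̃₁ⁿ` i.i.d.
`p(x₁)` independent of `M₂` the law of `(X̃₁ⁿ, g₂(M₂,X̃₁ⁿ))` is within total
variation `δ₂` of `∏ᵢ p(x₁ᵢ,x₂ᵢ)`, the joint law of `(X₁ⁿ,X₂ⁿ)` is within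
total variation `δ₁ + δ₂` of `∏ᵢ p(x₁ᵢ,x₂ᵢ)`. -/
theorem stmt18 (n : ℕ)
    (p : ZMod 2 → ZMod 2 → ℝ) (hp0 : ∀ x₁ x₂, 0 ≤ p x₁ x₂)
    (hp1 : ∑ x₁ : ZMod 2, ∑ x₂ : ZMod 2, p x₁ x₂ = 1)
    (M₁ M₂ : Type) [Fintype M₁] [Nonempty M₁] [Fintype M₂] [Nonempty M₂]
    (g₁ : M₁ → (Fin n → ZMod 2))
    (g₂ : M₂ → (Fin n → ZMod 2) → (Fin n → ZMod 2))
    (δ₁ δ₂ : ℝ)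
    (h₁ : (1 / 2) * ∑ x₁ : Fin n → ZMod 2,
        |(∑ m₁ : M₁, if g₁ m₁ = x₁ then (1 / (Fintype.card M₁ : ℝ)) else 0)
          - ∏ i, (∑ x₂ : ZMod 2, p (x₁ i) x₂)| ≤ δ₁)
    (h₂ : (1 / 2) * ∑ x₁ : Fin n → ZMod 2, ∑ x₂ : Fin n → ZMod 2,
        |(∑ m₂ : M₂,
            if g₂ m₂ x₁ = x₂ then
              (1 / (Fintype.card M₂ : ℝ)) * ∏ i, (∑ x₂' : ZMod 2, p (x₁ i) x₂')
            else 0)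
          - ∏ i, p (x₁ i) (x₂ i)| ≤ δ₂) :
    (1 / 2) * ∑ x₁ : Fin n → ZMod 2, ∑ x₂ : Fin n → ZMod 2,
      |(∑ m₁ : M₁, ∑ m₂ : M₂,
          if g₁ m₁ = x₁ ∧ g₂ m₂ (g₁ m₁) = x₂ then
            (1 / (Fintype.card M₁ : ℝ)) * (1 / (Fintype.card M₂ : ℝ))
          else 0)
        - ∏ i, p (x₁ i) (x₂ i)| ≤ δ₁ + δ₂ := by

  classical
  let F := (Fin n → ZMod 2)
  set q : F → ℝ := fun x₁ => ∑ m₁ : M₁, if g₁ m₁ = x₁ then (1 / (Fintype.card M₁ : ℝ)) else 0 with hq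
  set K : F → F → ℝ := fun x₁ x₂ => ∑ m₂ : M₂, if g₂ m₂ x₁ = x₂ then (1 / (Fintype.card M₂ : ℝ)) else 0 with hK
  set π : F → ℝ := fun x₁ => ∏ i, (∑ x₂ : ZMod 2, p (x₁ i) x₂) with hπ
  have hcard2 : (Fintype.card M₂ : ℝ) ≠ 0 := by
    exact_mod_cast Fintype.card_ne_zero
  have hK0 : ∀ x₁ x₂, 0 ≤ K x₁ x₂ := fun x₁ x₂ =>
    Finset.sum_nonneg fun m _ => by split <;> positivity
  have hKsum : ∀ x₁ : F, ∑ x₂ : F, K x₁ x₂ = 1 := by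
    intro x₁
    rw [hK]
    rw [Finset.sum_comm]
    simp [Finset.sum_ite_eq, hcard2]
    have hin : ∀ m : M₂, (∑ x : F, if g₂ m x₁ = x then ((Fintype.card M₂ : ℝ))⁻¹ else 0) = (Fintype.card M₂ : ℝ)⁻¹ := fun m => by
      rw [Finset.sum_eq_single (g₂ m x₁)] <;> simp_all [eq_comm]
    rw [Finset.sum_congr rfl fun m _ => hin m]
    simp [hcard2]
  -- joint factorization
  have hjoint : ∀ x₁ x₂ : F,
      (∑ m₁ : M₁, ∑ m₂ : M₂,
          if g₁ m₁ = x₁ ∧ g₂ m₂ (g₁ m₁) = x₂ then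
            (1 / (Fintype.card M₁ : ℝ)) * (1 / (Fintype.card M₂ : ℝ))
          else 0) = q x₁ * K x₁ x₂ := by
    intro x₁ x₂
    rw [hq, hK]
    simp only [Finset.sum_mul]
    refine Finset.sum_congr rfl fun m₁ _ => ?_
    by_cases h : g₁ m₁ = x₁
    · simp only [h, true_and, if_true, Finset.mul_sum, mul_ite, mul_zero]
    · simp [h]
  -- h₂ summand factorization
  have hker : ∀ x₁ x₂ : F,
      (∑ m₂ : M₂,
          if g₂ m₂ x₁ = x₂ then
            (1 / (Fintype.card M₂ : ℝ)) * π x₁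
          else 0) = K x₁ x₂ * π x₁ := by
    intro x₁ x₂
    rw [hK, Finset.sum_mul]
    refine Finset.sum_congr rfl fun m₂ _ => ?_
    split <;> simp
  have key : ∀ x₁ x₂ : F,
      |q x₁ * K x₁ x₂ - ∏ i, p (x₁ i) (x₂ i)|
        ≤ |q x₁ - π x₁| * K x₁ x₂ + |K x₁ x₂ * π x₁ - ∏ i, p (x₁ i) (x₂ i)| := by
    intro x₁ x₂
    have : q x₁ * K x₁ x₂ - ∏ i, p (x₁ i) (x₂ i)
        = (q x₁ - π x₁) * K x₁ x₂ + (K x₁ x₂ * π x₁ - ∏ i, p (x₁ i) (x₂ i)) := by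
      ring
    rw [this]
    calc _ ≤ |(q x₁ - π x₁) * K x₁ x₂| + |K x₁ x₂ * π x₁ - ∏ i, p (x₁ i) (x₂ i)| :=
          abs_add_le _ _
      _ = |q x₁ - π x₁| * K x₁ x₂ + _ := by
          rw [abs_mul, abs_of_nonneg (hK0 x₁ x₂)]
  have step : ∑ x₁ : F, ∑ x₂ : F, |q x₁ * K x₁ x₂ - ∏ i, p (x₁ i) (x₂ i)|
      ≤ (∑ x₁ : F, |q x₁ - π x₁|)
        + ∑ x₁ : F, ∑ x₂ : F, |K x₁ x₂ * π x₁ - ∏ i, p (x₁ i) (x₂ i)| := by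
    have h1 : ∀ x₁ : F, ∑ x₂ : F, |q x₁ - π x₁| * K x₁ x₂ = |q x₁ - π x₁| := by
      intro x₁
      rw [← Finset.mul_sum, hKsum, mul_one]
    calc ∑ x₁ : F, ∑ x₂ : F, |q x₁ * K x₁ x₂ - ∏ i, p (x₁ i) (x₂ i)|
        ≤ ∑ x₁ : F, ∑ x₂ : F,
            (|q x₁ - π x₁| * K x₁ x₂ + |K x₁ x₂ * π x₁ - ∏ i, p (x₁ i) (x₂ i)|) := by
          refine Finset.sum_le_sum fun x₁ _ => Finset.sum_le_sum fun x₂ _ => key x₁ x₂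
      _ = _ := by
          simp only [Finset.sum_add_distrib]
          rw [Finset.sum_congr rfl fun x₁ _ => h1 x₁]
  have h₂' : (1 / 2 : ℝ) * ∑ x₁ : F, ∑ x₂ : F,
      |K x₁ x₂ * π x₁ - ∏ i, p (x₁ i) (x₂ i)| ≤ δ₂ := by
    refine le_trans (le_of_eq ?_) h₂
    congr 1
    refine Finset.sum_congr rfl fun x₁ _ => Finset.sum_congr rfl fun x₂ _ => ?_
    rw [hker]
  have goalrw : ∀ x₁ x₂ : F,
      |(∑ m₁ : M₁, ∑ m₂ : M₂,
          if g₁ m₁ = x₁ ∧ g₂ m₂ (g₁ m₁) = x₂ then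
            (1 / (Fintype.card M₁ : ℝ)) * (1 / (Fintype.card M₂ : ℝ))
          else 0) - ∏ i, p (x₁ i) (x₂ i)|
        = |q x₁ * K x₁ x₂ - ∏ i, p (x₁ i) (x₂ i)| := fun x₁ x₂ => by rw [hjoint]
  rw [Finset.sum_congr rfl fun x₁ _ => Finset.sum_congr rfl fun x₂ _ => goalrw x₁ x₂]
  calc (1 / 2) * ∑ x₁ : F, ∑ x₂ : F, |q x₁ * K x₁ x₂ - ∏ i, p (x₁ i) (x₂ i)|
      ≤ (1 / 2) * ((∑ x₁ : F, |q x₁ - π x₁|)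
          + ∑ x₁ : F, ∑ x₂ : F, |K x₁ x₂ * π x₁ - ∏ i, p (x₁ i) (x₂ i)|) := by
        linarith [step]
    _ = (1 / 2) * (∑ x₁ : F, |q x₁ - π x₁|)
          + (1 / 2) * ∑ x₁ : F, ∑ x₂ : F, |K x₁ x₂ * π x₁ - ∏ i, p (x₁ i) (x₂ i)| := by
        ring
    _ ≤ δ₁ + δ₂ := by
        refine add_le_add ?_ h₂'
        exact h₁
end

section
/- Let ℐ₁ and ℐ₂ be finite index sets, and let g₁: F₂ⁿ → ℐ₁, ψ₁: ℐ₁ → F₂ⁿ, g₂: F₂ⁿ → ℐ₂, ψ₂: ℐ₂ × F₂ⁿ → F₂ⁿ satisfy: (i) for X̃₁ⁿ i.i.d. with law p(x₁), the total variation distance between the law of (X̃₁ⁿ, ψ₁(g₁(X̃₁ⁿ))) and the product ∏ᵢ p(x₁ᵢ)p(x̂₁ᵢ|x₁ᵢ) is at most δ₁; (ii) for (X̃₂ⁿ,Ỹⁿ) i.i.d. with law p(x₂,x̂₁), the total variation distance between the law of (X̃₂ⁿ, ψ₂(g₂(X̃₂ⁿ), Ỹⁿ)) and the product ∏ᵢ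 p(x₂ᵢ)p(x̂₂ᵢ|x₂ᵢ) is at most δ₂. Then, for (X₁ⁿ,X₂ⁿ) i.i.d. with law p(x₁,x₂), X̂₁ⁿ = ψ₁(g₁(X₁ⁿ)), and X̂₂ⁿ = ψ₂(g₂(X₂ⁿ), X̂₁ⁿ): (1/n)·E[d_H(X₂ⁿ, X̂₂ⁿ)] ≤ D₂ + δ₁ + δ₂. (Distortion guarantee for the second source in the Berger–Tung distributed lossy compression scheme built from a lossy source code and a Wyner–Ziv code.) -/
open Finset

private lemma sumProd {n : ℕ} (h : Fin n → ZMod 2 → ℝ) :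
    ∑ x : Fin n → ZMod 2, ∏ i, h i (x i) = ∏ i, ∑ a, h i a := by
  rw [Finset.prod_univ_sum, Fintype.piFinset_univ]

private lemma sumProd2 {n : ℕ} (h : Fin n → ZMod 2 → ZMod 2 → ℝ) :
    ∑ x : Fin n → ZMod 2, ∑ y : Fin n → ZMod 2, ∏ i, h i (x i) (y i)
      = ∏ i, ∑ a : ZMod 2, ∑ b : ZMod 2, h i a b := by
  have e : ∀ x : Fin n → ZMod 2,
      ∑ y : Fin n → ZMod 2, ∏ i, h i (x i) (y i) = ∏ i, ∑ b, h i (x i) b :=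
    fun x => sumProd (fun i b => h i (x i) b)
  simp_rw [e]
  exact sumProd (fun i a => ∑ b, h i a b)

/-- **Berger–Tung distributed lossy compression: distortion of the second
source.**  Let `p(x₁,x₂)` be a pmf on `F₂²`, `W₁ = p(x̂₁|x₁)` and
`W₂ = p(x̂₂|x₂)` conditional pmfs with per-letter distortion
`∑ p(x₂)W₂(x̂₂|x₂)1{x̂₂≠x₂} ≤ D₂`.  Assume: (i) for `X̃₁ⁿ` i.i.d. `p(x₁)`,
the law of `(X̃₁ⁿ, ψ₁(g₁(X̃₁ⁿ)))` is within total variation `δ₁` of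
`∏ᵢ p(x₁ᵢ)W₁(x̂₁ᵢ|x₁ᵢ)`; (ii) for `(X̃₂ⁿ,Ỹⁿ)` i.i.d.
`p(x₂,x̂₁) = ∑_{x₁} p(x₁,x₂)W₁(x̂₁|x₁)`, the law of
`(X̃₂ⁿ, ψ₂(g₂(X̃₂ⁿ),Ỹⁿ))` is within total variation `δ₂` of
`∏ᵢ p(x₂ᵢ)W₂(x̂₂ᵢ|x₂ᵢ)`.  Then for `(X₁ⁿ,X₂ⁿ)` i.i.d. `p(x₁,x₂)`,
`X̂₁ⁿ = ψ₁(g₁(X₁ⁿ))`, `X̂₂ⁿ = ψ₂(g₂(X₂ⁿ), X̂₁ⁿ)`: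
`(1/n)·E[d_H(X₂ⁿ,X̂₂ⁿ)] ≤ D₂ + δ₁ + δ₂`. -/
theorem stmt19 (n : ℕ) (hn : 0 < n)
    (p : ZMod 2 → ZMod 2 → ℝ) (hp0 : ∀ x₁ x₂, 0 ≤ p x₁ x₂)
    (hp1 : ∑ x₁ : ZMod 2, ∑ x₂ : ZMod 2, p x₁ x₂ = 1)
    (W₁ W₂ : ZMod 2 → ZMod 2 → ℝ)
    (hW₁0 : ∀ x xh, 0 ≤ W₁ x xh) (hW₁1 : ∀ x, ∑ xh : ZMod 2, W₁ x xh = 1)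
    (hW₂0 : ∀ x xh, 0 ≤ W₂ x xh) (hW₂1 : ∀ x, ∑ xh : ZMod 2, W₂ x xh = 1)
    (D₂ δ₁ δ₂ : ℝ)
    (hdist : ∑ x₂ : ZMod 2, ∑ xh₂ : ZMod 2,
        (if xh₂ ≠ x₂ then (∑ x₁ : ZMod 2, p x₁ x₂) * W₂ x₂ xh₂ else 0) ≤ D₂)
    (I₁ I₂ : Type) [Fintype I₁] [Fintype I₂]
    (g₁ : (Fin n → ZMod 2) → I₁) (ψ₁ : I₁ → (Fin n → ZMod 2))
    (g₂ : (Fin n → ZMod 2) → I₂)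
    (ψ₂ : I₂ → (Fin n → ZMod 2) → (Fin n → ZMod 2))
    (h₁ : (1 / 2) * ∑ x₁ : Fin n → ZMod 2, ∑ xh₁ : Fin n → ZMod 2,
        |(if ψ₁ (g₁ x₁) = xh₁ then ∏ i, (∑ x₂ : ZMod 2, p (x₁ i) x₂) else 0)
          - ∏ i, (∑ x₂ : ZMod 2, p (x₁ i) x₂) * W₁ (x₁ i) (xh₁ i)| ≤ δ₁)
    (h₂ : (1 / 2) * ∑ x₂ : Fin n → ZMod 2, ∑ xh₂ : Fin n → ZMod 2,
        |(∑ y : Fin n → ZMod 2,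
            if ψ₂ (g₂ x₂) y = xh₂ then
              ∏ i, (∑ x₁ : ZMod 2, p x₁ (x₂ i) * W₁ x₁ (y i))
            else 0)
          - ∏ i, (∑ x₁ : ZMod 2, p x₁ (x₂ i)) * W₂ (x₂ i) (xh₂ i)| ≤ δ₂) :
    (1 / (n : ℝ)) * ∑ x₁ : Fin n → ZMod 2, ∑ x₂ : Fin n → ZMod 2,
      (∏ i, p (x₁ i) (x₂ i)) *
        (hammingDist x₂ (ψ₂ (g₂ x₂) (ψ₁ (g₁ x₁))) : ℝ) ≤ D₂ + δ₁ + δ₂ := by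
  classical
  have hn' : (0:ℝ) < n := by exact_mod_cast hn
  set A : (Fin n → ZMod 2) → (Fin n → ZMod 2) → ℝ := fun x₂ xh₂ =>
    ∑ x₁ : Fin n → ZMod 2, (∏ i, p (x₁ i) (x₂ i)) *
      (if ψ₂ (g₂ x₂) (ψ₁ (g₁ x₁)) = xh₂ then 1 else 0) with hA
  set B : (Fin n → ZMod 2) → (Fin n → ZMod 2) → ℝ := fun x₂ xh₂ =>
    ∑ y : Fin n → ZMod 2,
      if ψ₂ (g₂ x₂) y = xh₂ then ∏ i, (∑ a, p a (x₂ i) * W₁ a (y i)) else 0 with hB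
  set C : (Fin n → ZMod 2) → (Fin n → ZMod 2) → ℝ := fun x₂ xh₂ =>
    ∏ i, (∑ a, p a (x₂ i)) * W₂ (x₂ i) (xh₂ i) with hC
  -- total masses
  have sumA : ∑ x₂ : Fin n → ZMod 2, ∑ xh₂ : Fin n → ZMod 2, A x₂ xh₂ = 1 := by
    have e1 : ∀ x₂ : Fin n → ZMod 2, ∑ xh₂ : Fin n → ZMod 2, A x₂ xh₂
        = ∑ x₁ : Fin n → ZMod 2, ∏ i, p (x₁ i) (x₂ i) := by
      intro x₂
      simp only [hA]
      rw [Finset.sum_comm]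
      refine Finset.sum_congr rfl fun x₁ _ => ?_
      simp [mul_ite, Finset.sum_ite_eq]
    have e2 : ∑ x₂ : Fin n → ZMod 2, ∑ x₁ : Fin n → ZMod 2, ∏ i, p (x₁ i) (x₂ i)
        = ∏ i : Fin n, ∑ a : ZMod 2, ∑ b : ZMod 2, p b a :=
      sumProd2 (fun _ a b => p b a)
    have e3 : ∑ a : ZMod 2, ∑ b : ZMod 2, p b a = 1 := by
      rw [Finset.sum_comm]; exact hp1
    simp_rw [e1]
    rw [e2]
    simp [e3]
  have sumC : ∑ x₂ : Fin n → ZMod 2, ∑ xh₂ : Fin n → ZMod 2, C x₂ xh₂ = 1 := by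
    have e2 : ∑ x₂ : Fin n → ZMod 2, ∑ xh₂ : Fin n → ZMod 2,
        ∏ i, (∑ a, p a (x₂ i)) * W₂ (x₂ i) (xh₂ i)
        = ∏ i : Fin n, ∑ a : ZMod 2, ∑ b : ZMod 2, (∑ c, p c a) * W₂ a b :=
      sumProd2 (fun _ a b => (∑ c, p c a) * W₂ a b)
    have e3 : ∑ a : ZMod 2, ∑ b : ZMod 2, (∑ c, p c a) * W₂ a b = 1 := by
      simp_rw [← Finset.mul_sum, hW₂1, mul_one]
      rw [Finset.sum_comm]; exact hp1
    simp only [hC]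
    rw [e2]
    simp [e3]
  -- TV bounds
  have hAB : ∑ x₂ : Fin n → ZMod 2, ∑ xh₂ : Fin n → ZMod 2,
      |A x₂ xh₂ - B x₂ xh₂| ≤ 2 * δ₁ := by
    have eA : ∀ x₂ xh₂ : Fin n → ZMod 2, A x₂ xh₂ =
        ∑ x₁ : Fin n → ZMod 2, ∑ y : Fin n → ZMod 2,
          (if ψ₂ (g₂ x₂) y = xh₂ then (1:ℝ) else 0) *
          ((∏ i, p (x₁ i) (x₂ i)) * (if ψ₁ (g₁ x₁) = y then (1:ℝ) else 0)) := by
      intro x₂ xh₂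
      simp only [hA]
      refine Finset.sum_congr rfl fun x₁ _ => ?_
      rw [eq_comm]
      simp [mul_ite, ite_mul, Finset.sum_ite_eq]
    have eB : ∀ x₂ xh₂ : Fin n → ZMod 2, B x₂ xh₂ =
        ∑ x₁ : Fin n → ZMod 2, ∑ y : Fin n → ZMod 2,
          (if ψ₂ (g₂ x₂) y = xh₂ then (1:ℝ) else 0) *
          ((∏ i, p (x₁ i) (x₂ i)) * ∏ i, W₁ (x₁ i) (y i)) := by
      intro x₂ xh₂
      have hs : ∀ y : Fin n → ZMod 2,
          ∑ x₁ : Fin n → ZMod 2, (∏ i, p (x₁ i) (x₂ i)) * ∏ i, W₁ (x₁ i) (y i)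
          = ∏ i, ∑ a, p a (x₂ i) * W₁ a (y i) := by
        intro y
        have h1 : ∑ x₁ : Fin n → ZMod 2, ∏ i, (p (x₁ i) (x₂ i) * W₁ (x₁ i) (y i))
            = ∏ i, ∑ a, p a (x₂ i) * W₁ a (y i) :=
          sumProd (fun i a => p a (x₂ i) * W₁ a (y i))
        rw [← h1]
        exact Finset.sum_congr rfl fun x₁ _ => (Finset.prod_mul_distrib).symm
      have swp : ∑ y : Fin n → ZMod 2, ∑ x₁ : Fin n → ZMod 2,
          (if ψ₂ (g₂ x₂) y = xh₂ then (1:ℝ) else 0) *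
          ((∏ i, p (x₁ i) (x₂ i)) * ∏ i, W₁ (x₁ i) (y i))
          = ∑ x₁ : Fin n → ZMod 2, ∑ y : Fin n → ZMod 2,
          (if ψ₂ (g₂ x₂) y = xh₂ then (1:ℝ) else 0) *
          ((∏ i, p (x₁ i) (x₂ i)) * ∏ i, W₁ (x₁ i) (y i)) := Finset.sum_comm
      rw [← swp]
      simp only [hB]
      refine Finset.sum_congr rfl fun y _ => ?_
      rw [← Finset.mul_sum, hs y, boole_mul]
    have hub : ∀ x₂ xh₂ : Fin n → ZMod 2, |A x₂ xh₂ - B x₂ xh₂| ≤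
        ∑ x₁ : Fin n → ZMod 2, ∑ y : Fin n → ZMod 2,
          (if ψ₂ (g₂ x₂) y = xh₂ then (1:ℝ) else 0) *
          ((∏ i, p (x₁ i) (x₂ i)) *
            |(if ψ₁ (g₁ x₁) = y then (1:ℝ) else 0) - ∏ i, W₁ (x₁ i) (y i)|) := by
      intro x₂ xh₂
      rw [eA x₂ xh₂, eB x₂ xh₂, ← Finset.sum_sub_distrib]
      refine le_trans (Finset.abs_sum_le_sum_abs _ _)
        (Finset.sum_le_sum fun x₁ _ => ?_)
      rw [← Finset.sum_sub_distrib]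
      refine le_trans (Finset.abs_sum_le_sum_abs _ _)
        (Finset.sum_le_sum fun y _ => ?_)
      rw [← mul_sub, ← mul_sub, abs_mul, abs_mul]
      rw [abs_of_nonneg (show (0:ℝ) ≤ ∏ i, p (x₁ i) (x₂ i) from
        Finset.prod_nonneg fun i _ => hp0 _ _)]
      rw [abs_of_nonneg (show (0:ℝ) ≤ (if ψ₂ (g₂ x₂) y = xh₂ then (1:ℝ) else 0)
        by split <;> norm_num)]
    have c1 : ∀ x₂ : Fin n → ZMod 2,
        ∑ xh₂ : Fin n → ZMod 2, ∑ x₁ : Fin n → ZMod 2, ∑ y : Fin n → ZMod 2,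
          (if ψ₂ (g₂ x₂) y = xh₂ then (1:ℝ) else 0) *
          ((∏ i, p (x₁ i) (x₂ i)) *
            |(if ψ₁ (g₁ x₁) = y then (1:ℝ) else 0) - ∏ i, W₁ (x₁ i) (y i)|)
        = ∑ x₁ : Fin n → ZMod 2, ∑ y : Fin n → ZMod 2,
            (∏ i, p (x₁ i) (x₂ i)) *
            |(if ψ₁ (g₁ x₁) = y then (1:ℝ) else 0) - ∏ i, W₁ (x₁ i) (y i)| := by
      intro x₂
      rw [Finset.sum_comm]
      refine Finset.sum_congr rfl fun x₁ _ => ?_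
      rw [Finset.sum_comm]
      refine Finset.sum_congr rfl fun y _ => ?_
      simp [ite_mul, Finset.sum_ite_eq]
    have c2 : ∑ x₂ : Fin n → ZMod 2, ∑ x₁ : Fin n → ZMod 2, ∑ y : Fin n → ZMod 2,
          (∏ i, p (x₁ i) (x₂ i)) *
            |(if ψ₁ (g₁ x₁) = y then (1:ℝ) else 0) - ∏ i, W₁ (x₁ i) (y i)|
        = ∑ x₁ : Fin n → ZMod 2, ∑ y : Fin n → ZMod 2,
            (∏ i, ∑ a, p (x₁ i) a) *
            |(if ψ₁ (g₁ x₁) = y then (1:ℝ) else 0) - ∏ i, W₁ (x₁ i) (y i)| := by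
      rw [Finset.sum_comm]
      refine Finset.sum_congr rfl fun x₁ _ => ?_
      rw [Finset.sum_comm]
      refine Finset.sum_congr rfl fun y _ => ?_
      rw [← Finset.sum_mul]
      congr 1
      exact sumProd (fun i a => p (x₁ i) a)
    have c3 : ∑ x₁ : Fin n → ZMod 2, ∑ y : Fin n → ZMod 2,
          (∏ i, ∑ a, p (x₁ i) a) *
            |(if ψ₁ (g₁ x₁) = y then (1:ℝ) else 0) - ∏ i, W₁ (x₁ i) (y i)|
        = ∑ x₁ : Fin n → ZMod 2, ∑ xh₁ : Fin n → ZMod 2,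
            |(if ψ₁ (g₁ x₁) = xh₁ then ∏ i, (∑ x₂ : ZMod 2, p (x₁ i) x₂) else 0)
              - ∏ i, (∑ x₂ : ZMod 2, p (x₁ i) x₂) * W₁ (x₁ i) (xh₁ i)| := by
      refine Finset.sum_congr rfl fun x₁ _ => Finset.sum_congr rfl fun y _ => ?_
      have hP : (0:ℝ) ≤ ∏ i, ∑ a, p (x₁ i) a :=
        Finset.prod_nonneg fun i _ => Finset.sum_nonneg fun a _ => hp0 _ _
      rw [show (∏ i, ∑ a, p (x₁ i) a) *
          |(if ψ₁ (g₁ x₁) = y then (1:ℝ) else 0) - ∏ i, W₁ (x₁ i) (y i)|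
          = |(∏ i, ∑ a, p (x₁ i) a) *
              ((if ψ₁ (g₁ x₁) = y then (1:ℝ) else 0) - ∏ i, W₁ (x₁ i) (y i))|
        from by rw [abs_mul, abs_of_nonneg hP]]
      congr 1
      rw [mul_sub, mul_ite, mul_one, mul_zero, ← Finset.prod_mul_distrib]
    have chain : ∑ x₂ : Fin n → ZMod 2, ∑ xh₂ : Fin n → ZMod 2,
        |A x₂ xh₂ - B x₂ xh₂|
        ≤ ∑ x₁ : Fin n → ZMod 2, ∑ xh₁ : Fin n → ZMod 2,
            |(if ψ₁ (g₁ x₁) = xh₁ then ∏ i, (∑ x₂ : ZMod 2, p (x₁ i) x₂) else 0)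
              - ∏ i, (∑ x₂ : ZMod 2, p (x₁ i) x₂) * W₁ (x₁ i) (xh₁ i)| := by
      calc ∑ x₂ : Fin n → ZMod 2, ∑ xh₂ : Fin n → ZMod 2, |A x₂ xh₂ - B x₂ xh₂|
          ≤ ∑ x₂ : Fin n → ZMod 2, ∑ xh₂ : Fin n → ZMod 2,
              ∑ x₁ : Fin n → ZMod 2, ∑ y : Fin n → ZMod 2,
                (if ψ₂ (g₂ x₂) y = xh₂ then (1:ℝ) else 0) *
                ((∏ i, p (x₁ i) (x₂ i)) *
                  |(if ψ₁ (g₁ x₁) = y then (1:ℝ) else 0) - ∏ i, W₁ (x₁ i) (y i)|) :=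
            Finset.sum_le_sum fun x₂ _ => Finset.sum_le_sum fun xh₂ _ => hub x₂ xh₂
        _ = ∑ x₂ : Fin n → ZMod 2, ∑ x₁ : Fin n → ZMod 2, ∑ y : Fin n → ZMod 2,
              (∏ i, p (x₁ i) (x₂ i)) *
                |(if ψ₁ (g₁ x₁) = y then (1:ℝ) else 0) - ∏ i, W₁ (x₁ i) (y i)| :=
            Finset.sum_congr rfl fun x₂ _ => c1 x₂
        _ = ∑ x₁ : Fin n → ZMod 2, ∑ y : Fin n → ZMod 2,
              (∏ i, ∑ a, p (x₁ i) a) *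
                |(if ψ₁ (g₁ x₁) = y then (1:ℝ) else 0) - ∏ i, W₁ (x₁ i) (y i)| := c2
        _ = _ := c3
    linarith [h₁]
  have hBC : ∑ x₂ : Fin n → ZMod 2, ∑ xh₂ : Fin n → ZMod 2,
      |B x₂ xh₂ - C x₂ xh₂| ≤ 2 * δ₂ := by
    simp only [hB, hC]
    linarith [h₂]
  -- distortion under the ideal distribution
  have hCd : ∑ x₂ : Fin n → ZMod 2, ∑ xh₂ : Fin n → ZMod 2,
      C x₂ xh₂ * (hammingDist x₂ xh₂ : ℝ) ≤ (n : ℝ) * D₂ := by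
    have hdd : ∀ x y : Fin n → ZMod 2,
        (hammingDist x y : ℝ) = ∑ k, if x k ≠ y k then (1:ℝ) else 0 := by
      intro x y
      rw [hammingDist, Finset.card_filter]
      push_cast
      simp
    have S1 : ∑ a : ZMod 2, ∑ b : ZMod 2, (∑ c, p c a) * W₂ a b = 1 := by
      simp_rw [← Finset.mul_sum, hW₂1, mul_one]
      rw [Finset.sum_comm]; exact hp1
    have hSd : ∑ a : ZMod 2, ∑ b : ZMod 2,
        (∑ c, p c a) * W₂ a b * (if a ≠ b then (1:ℝ) else 0) ≤ D₂ := by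
      refine le_trans (le_of_eq ?_) hdist
      refine Finset.sum_congr rfl fun a _ => Finset.sum_congr rfl fun b _ => ?_
      by_cases h : a = b
      · simp [h]
      · simp [h, Ne.symm h]
    have ek : ∀ k : Fin n, ∑ x₂ : Fin n → ZMod 2, ∑ xh₂ : Fin n → ZMod 2,
        C x₂ xh₂ * (if x₂ k ≠ xh₂ k then (1:ℝ) else 0)
        = ∑ a : ZMod 2, ∑ b : ZMod 2,
            (∑ c, p c a) * W₂ a b * (if a ≠ b then (1:ℝ) else 0) := by
      intro k
      have e1 : ∀ x₂ xh₂ : Fin n → ZMod 2,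
          C x₂ xh₂ * (if x₂ k ≠ xh₂ k then (1:ℝ) else 0)
          = ∏ i, ((∑ c, p c (x₂ i)) * W₂ (x₂ i) (xh₂ i) *
              (if i = k then (if x₂ i ≠ xh₂ i then (1:ℝ) else 0) else 1)) := by
        intro x₂ xh₂
        rw [Finset.prod_mul_distrib]
        simp only [hC]
        congr 1
        rw [Finset.prod_ite_eq' Finset.univ k
          (fun i => if x₂ i ≠ xh₂ i then (1:ℝ) else 0)]
        simp
      have e2 : ∑ x₂ : Fin n → ZMod 2, ∑ xh₂ : Fin n → ZMod 2,
          (∏ i, ((∑ c, p c (x₂ i)) * W₂ (x₂ i) (xh₂ i) *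
              (if i = k then (if x₂ i ≠ xh₂ i then (1:ℝ) else 0) else 1)))
          = ∏ i : Fin n, ∑ a : ZMod 2, ∑ b : ZMod 2,
              ((∑ c, p c a) * W₂ a b *
                (if i = k then (if a ≠ b then (1:ℝ) else 0) else 1)) :=
        sumProd2 (fun i a b => (∑ c, p c a) * W₂ a b *
          (if i = k then (if a ≠ b then (1:ℝ) else 0) else 1))
      have e3 : ∀ i : Fin n, (∑ a : ZMod 2, ∑ b : ZMod 2,
          ((∑ c, p c a) * W₂ a b *
            (if i = k then (if a ≠ b then (1:ℝ) else 0) else 1)))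
          = if i = k then ∑ a : ZMod 2, ∑ b : ZMod 2,
              (∑ c, p c a) * W₂ a b * (if a ≠ b then (1:ℝ) else 0) else 1 := by
        intro i
        by_cases h : i = k
        · simp [h]
        · simp [h, S1]
      simp_rw [e1]
      rw [e2]
      simp_rw [e3]
      rw [Finset.prod_ite_eq' Finset.univ k]
      simp
    calc ∑ x₂ : Fin n → ZMod 2, ∑ xh₂ : Fin n → ZMod 2,
        C x₂ xh₂ * (hammingDist x₂ xh₂ : ℝ)
        = ∑ k : Fin n, ∑ x₂ : Fin n → ZMod 2, ∑ xh₂ : Fin n → ZMod 2,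
            C x₂ xh₂ * (if x₂ k ≠ xh₂ k then (1:ℝ) else 0) := by
          simp_rw [hdd, Finset.mul_sum]
          have sw : ∀ x₂ : Fin n → ZMod 2,
              ∑ xh₂ : Fin n → ZMod 2, ∑ k : Fin n,
                C x₂ xh₂ * (if x₂ k ≠ xh₂ k then (1:ℝ) else 0)
              = ∑ k : Fin n, ∑ xh₂ : Fin n → ZMod 2,
                C x₂ xh₂ * (if x₂ k ≠ xh₂ k then (1:ℝ) else 0) :=
            fun x₂ => Finset.sum_comm
          simp_rw [sw]
          exact Finset.sum_comm
      _ = ∑ k : Fin n, ∑ a : ZMod 2, ∑ b : ZMod 2,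
            (∑ c, p c a) * W₂ a b * (if a ≠ b then (1:ℝ) else 0) :=
          Finset.sum_congr rfl fun k _ => ek k
      _ = (n : ℝ) * (∑ a : ZMod 2, ∑ b : ZMod 2,
            (∑ c, p c a) * W₂ a b * (if a ≠ b then (1:ℝ) else 0)) := by
          rw [Finset.sum_const, Finset.card_univ, Fintype.card_fin, nsmul_eq_mul]
      _ ≤ (n : ℝ) * D₂ := by
          exact mul_le_mul_of_nonneg_left hSd (by positivity)
  -- rewrite goal sum
  have egoal : ∑ x₁ : Fin n → ZMod 2, ∑ x₂ : Fin n → ZMod 2,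
      (∏ i, p (x₁ i) (x₂ i)) *
        (hammingDist x₂ (ψ₂ (g₂ x₂) (ψ₁ (g₁ x₁))) : ℝ)
      = ∑ x₂ : Fin n → ZMod 2, ∑ xh₂ : Fin n → ZMod 2,
        A x₂ xh₂ * (hammingDist x₂ xh₂ : ℝ) := by
    have step : ∀ x₂ : Fin n → ZMod 2,
        ∑ xh₂ : Fin n → ZMod 2, A x₂ xh₂ * (hammingDist x₂ xh₂ : ℝ)
        = ∑ x₁ : Fin n → ZMod 2, (∏ i, p (x₁ i) (x₂ i)) *
            (hammingDist x₂ (ψ₂ (g₂ x₂) (ψ₁ (g₁ x₁))) : ℝ) := by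
      intro x₂
      simp only [hA, Finset.sum_mul]
      rw [Finset.sum_comm]
      refine Finset.sum_congr rfl fun x₁ _ => ?_
      simp [mul_ite, ite_mul, Finset.sum_ite_eq, mul_assoc]
    rw [Finset.sum_comm]
    exact (Finset.sum_congr rfl fun x₂ _ => (step x₂).symm)
  -- pointwise comparison
  have hd0 : ∀ x y : Fin n → ZMod 2, (0:ℝ) ≤ (hammingDist x y : ℝ) :=
    fun x y => Nat.cast_nonneg _
  have hdn : ∀ x y : Fin n → ZMod 2, (hammingDist x y : ℝ) ≤ (n : ℝ) := by
    intro x y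
    have h := hammingDist_le_card_fintype (x := x) (y := y)
    rw [Fintype.card_fin] at h
    exact_mod_cast h
  have term : ∀ x₂ xh₂ : Fin n → ZMod 2,
      A x₂ xh₂ * (hammingDist x₂ xh₂ : ℝ) ≤
        C x₂ xh₂ * (hammingDist x₂ xh₂ : ℝ) +
          ((n:ℝ)/2) * (|A x₂ xh₂ - C x₂ xh₂| + (A x₂ xh₂ - C x₂ xh₂)) := by
    intro x₂ xh₂
    rcases abs_cases (A x₂ xh₂ - C x₂ xh₂) with ⟨e1, e2⟩ | ⟨e1, e2⟩ <;>
      nlinarith [hd0 x₂ xh₂, hdn x₂ xh₂]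
  have sumle : ∑ x₂ : Fin n → ZMod 2, ∑ xh₂ : Fin n → ZMod 2,
      A x₂ xh₂ * (hammingDist x₂ xh₂ : ℝ)
      ≤ ∑ x₂ : Fin n → ZMod 2, ∑ xh₂ : Fin n → ZMod 2,
        (C x₂ xh₂ * (hammingDist x₂ xh₂ : ℝ) +
          ((n:ℝ)/2) * (|A x₂ xh₂ - C x₂ xh₂| + (A x₂ xh₂ - C x₂ xh₂))) :=
    Finset.sum_le_sum fun x₂ _ => Finset.sum_le_sum fun xh₂ _ => term x₂ xh₂
  have expand : ∑ x₂ : Fin n → ZMod 2, ∑ xh₂ : Fin n → ZMod 2,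
      (C x₂ xh₂ * (hammingDist x₂ xh₂ : ℝ) +
        ((n:ℝ)/2) * (|A x₂ xh₂ - C x₂ xh₂| + (A x₂ xh₂ - C x₂ xh₂)))
      = (∑ x₂ : Fin n → ZMod 2, ∑ xh₂ : Fin n → ZMod 2,
          C x₂ xh₂ * (hammingDist x₂ xh₂ : ℝ))
        + ((n:ℝ)/2) * (∑ x₂ : Fin n → ZMod 2, ∑ xh₂ : Fin n → ZMod 2,
            |A x₂ xh₂ - C x₂ xh₂|)
        + ((n:ℝ)/2) * ((∑ x₂ : Fin n → ZMod 2, ∑ xh₂ : Fin n → ZMod 2, A x₂ xh₂)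
            - (∑ x₂ : Fin n → ZMod 2, ∑ xh₂ : Fin n → ZMod 2, C x₂ xh₂)) := by
    simp only [mul_add, mul_sub, Finset.sum_add_distrib, Finset.sum_sub_distrib,
      Finset.mul_sum]
    ring
  have hACabs : ∑ x₂ : Fin n → ZMod 2, ∑ xh₂ : Fin n → ZMod 2,
      |A x₂ xh₂ - C x₂ xh₂| ≤ 2 * δ₁ + 2 * δ₂ := by
    have h3 : ∑ x₂ : Fin n → ZMod 2, ∑ xh₂ : Fin n → ZMod 2, |A x₂ xh₂ - C x₂ xh₂|
        ≤ ∑ x₂ : Fin n → ZMod 2, ∑ xh₂ : Fin n → ZMod 2,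
            (|A x₂ xh₂ - B x₂ xh₂| + |B x₂ xh₂ - C x₂ xh₂|) :=
      Finset.sum_le_sum fun x₂ _ => Finset.sum_le_sum fun xh₂ _ =>
        abs_sub_le _ _ _
    rw [show (∑ x₂ : Fin n → ZMod 2, ∑ xh₂ : Fin n → ZMod 2,
        (|A x₂ xh₂ - B x₂ xh₂| + |B x₂ xh₂ - C x₂ xh₂|))
        = (∑ x₂ : Fin n → ZMod 2, ∑ xh₂ : Fin n → ZMod 2, |A x₂ xh₂ - B x₂ xh₂|)
          + (∑ x₂ : Fin n → ZMod 2, ∑ xh₂ : Fin n → ZMod 2, |B x₂ xh₂ - C x₂ xh₂|) by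
      simp only [Finset.sum_add_distrib]] at h3
    linarith
  have key : ∑ x₂ : Fin n → ZMod 2, ∑ xh₂ : Fin n → ZMod 2,
      A x₂ xh₂ * (hammingDist x₂ xh₂ : ℝ)
      ≤ (n:ℝ) * D₂ + (n:ℝ) * δ₁ + (n:ℝ) * δ₂ := by
    rw [expand] at sumle
    rw [sumA, sumC] at sumle
    have hhalf : (0:ℝ) ≤ (n:ℝ)/2 := by positivity
    nlinarith [mul_le_mul_of_nonneg_left hACabs hhalf]
  rw [egoal, one_div, inv_mul_le_iff₀ hn']
  nlinarith [key]
end
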